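/- For every k ≥ 2 there exists a constant c_k > 0 such that every connected graph G on n vertices satisfies P(G,k) ≥ c_k·(log n)^{k-1}, where P(G,k) counts the unordered k-tuples (m₁ ≥ m₂ ≥ ⋯ ≥ m_k ≥ 1) with Σ m_i = e(G) realizable by a partition of E(G) into k disjoint parts of these sizes, each inducing a connected subgraph. -/

import Mathlib

/-- An edge set `E` induces a connected subgraph: the graph on the endpoint of edges of
`E` whose edges are exactly `E` is connected. -/
def EdgeConn {V : Type*} (E : Set (Sym2 V)) : Prop :=
  ((SimpleGraph.fromEdgeSet E).induce (SimpleGraph.fromEdgeSet E).support).Connected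

/-- The set of unordered `k`-tuples (encoded as weakly decreasing tuples) of positive
integers realizable as the part sizes of a partition of `E(G)` into `k` parts, each
inducing a connected subgraph. -/
def kEdgeTuples {V : Type*} (G : SimpleGraph V) (k : ℕ) : Set (Fin k → ℕ) :=
  {m | (∀ i, 1 ≤ m i) ∧ (∀ i j : Fin k, i ≤ j → m j ≤ m i) ∧
    ∃ E : Fin k → Set (Sym2 V), (⋃ i, E i) = G.edgeSet ∧
      (Pairwise fun i j => Disjoint (E i) (E j)) ∧
      ∀ i, EdgeConn (E i) ∧ (E i).ncard = m i}

/-- `P G k`: the number of unordered `k`-tuples realizable by connected edge partitions. -/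
noncomputable def P {V : Type*} (G : SimpleGraph V) (k : ℕ) : ℕ := (kEdgeTuples G k).ncard

namespace EPL
variable {V : Type*}

def srel (E : Set (Sym2 V)) (u v : V) : Prop := ∃ e ∈ E, u ∈ e ∧ v ∈ e
def SReach (E : Set (Sym2 V)) : V → V → Prop := Relation.ReflTransGen (srel E)
def vsup (E : Set (Sym2 V)) : Set V := {v | ∃ e ∈ E, v ∈ e}

lemma srel_symm {E : Set (Sym2 V)} : Symmetric (srel E) := by
  rintro a b ⟨e, he, ha, hb⟩; exact ⟨e, he, hb, ha⟩
lemma SReach.symm {E : Set (Sym2 V)} {a b : V} (h : SReach E a b) : SReach E b a :=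
  by haveI : Std.Symm (srel E) := ⟨fun a b h => srel_symm h⟩; exact Std.Symm.symm (r := Relation.ReflTransGen (srel E)) _ _ h
lemma SReach.trans {E : Set (Sym2 V)} {a b c : V} (h : SReach E a b) (h' : SReach E b c) :
    SReach E a c := Relation.ReflTransGen.trans h h'
lemma SReach.mono {E E' : Set (Sym2 V)} (hEE : E ⊆ E') {a b : V} (h : SReach E a b) :
    SReach E' a b := by
  induction h with
  | refl => exact Relation.ReflTransGen.refl
  | tail _ hbc ih => exact ih.tail (by obtain ⟨e, he, h1, h2⟩ := hbc; exact ⟨e, hEE he, h1, h2⟩)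

lemma sym2_exists_mem (e : Sym2 V) : ∃ v, v ∈ e := by
  obtain ⟨⟨a, b⟩, rfl⟩ := Quot.exists_rep e
  exact ⟨a, by show a ∈ s(a,b); simp⟩

/-- endpoints of edges used in a reach are reachable from the base -/
lemma sreach_lift {E : Set (Sym2 V)} {a u : V} (h : SReach E a u) :
    SReach {e ∈ E | ∀ v ∈ e, SReach E a v} a u := by
  induction h with
  | refl => exact Relation.ReflTransGen.refl
  | tail hab hbc ih =>
    rename_i b c
    obtain ⟨e, he, hb, hc⟩ := hbc
    refine ih.tail ⟨e, ⟨he, fun v hv => ?_⟩, hb, hc⟩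
    exact (hab.tail ⟨e, he, hb, hv⟩ : SReach E a v)

lemma sreach_endpoint {E : Set (Sym2 V)} {a b : V} (h : SReach E a b) :
    a = b ∨ b ∈ vsup E := by
  induction h with
  | refl => exact Or.inl rfl
  | tail _ hbc _ => obtain ⟨e, he, _, hc⟩ := hbc; exact Or.inr ⟨e, he, hc⟩


lemma mem_vsup {E : Set (Sym2 V)} {e : Sym2 V} (he : e ∈ E) {a : V} (ha : a ∈ e) :
    a ∈ vsup E := ⟨e, he, ha⟩

lemma exists_other_endpoint {e : Sym2 V} (hd : ¬ e.IsDiag) {a : V} (ha : a ∈ e) :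
    ∃ b, b ≠ a ∧ e = s(a, b) := by
  induction e with
  | _ x y =>
    rw [Sym2.mem_iff] at ha
    rw [Sym2.isDiag_iff_proj_eq] at hd
    rcases ha with rfl | rfl
    · exact ⟨y, fun h => hd h.symm, rfl⟩
    · exact ⟨x, fun h => hd h, Sym2.eq_swap⟩

lemma mem_support_of_mem_vsup {E : Set (Sym2 V)} (hd : ∀ e ∈ E, ¬ e.IsDiag) {a : V}
    (ha : a ∈ vsup E) : a ∈ (SimpleGraph.fromEdgeSet E).support := by
  obtain ⟨e, he, hae⟩ := ha
  obtain ⟨b, hb, rfl⟩ := exists_other_endpoint (hd e he) hae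
  exact ⟨b, by show (SimpleGraph.fromEdgeSet E).Adj a b; rw [SimpleGraph.fromEdgeSet_adj]; exact ⟨he, fun h => hb h.symm⟩⟩

lemma edgeConn_of_sreach {E : Set (Sym2 V)} (hd : ∀ e ∈ E, ¬ e.IsDiag) (hne : E.Nonempty)
    (h : ∀ a ∈ vsup E, ∀ b ∈ vsup E, SReach E a b) : EdgeConn E := by
  set H := SimpleGraph.fromEdgeSet E with hH
  rw [EdgeConn, SimpleGraph.connected_iff]
  constructor
  · rintro ⟨x, hx⟩ ⟨y, hy⟩
    have hx' : x ∈ vsup E := by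
      obtain ⟨w, hw⟩ := (SimpleGraph.mem_support H).mp hx
      rw [hH, SimpleGraph.fromEdgeSet_adj] at hw
      exact ⟨s(x, w), hw.1, by simp⟩
    have hy' : y ∈ vsup E := by
      obtain ⟨w, hw⟩ := (SimpleGraph.mem_support H).mp hy
      rw [hH, SimpleGraph.fromEdgeSet_adj] at hw
      exact ⟨s(y, w), hw.1, by simp⟩
    have key : ∀ a b : V, SReach E a b → ∀ (ha : a ∈ H.support) (hb : b ∈ H.support),
        (H.induce H.support).Reachable ⟨a, ha⟩ ⟨b, hb⟩ := by
      intro a b hr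
      induction hr with
      | refl => intro ha hb; rfl
      | tail _ hbc ih =>
        rename_i u c _
        intro ha hc
        obtain ⟨e, he, hu, huc⟩ := hbc
        by_cases huc' : u = c
        · subst huc'; exact ih ha hc
        · have hu' : u ∈ H.support := mem_support_of_mem_vsup hd (mem_vsup he hu)
          have hadj : H.Adj u c := by
            rw [hH, SimpleGraph.fromEdgeSet_adj]
            refine ⟨?_, huc'⟩
            rwa [← (Sym2.mem_and_mem_iff huc').mp ⟨hu, huc⟩]
          have : (H.induce H.support).Adj ⟨u, hu'⟩ ⟨c, hc⟩ := by
            simpa [SimpleGraph.induce] using hadj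
          exact (ih ha hu').trans this.reachable
    exact key x y (h x hx' y hy') hx hy
  · obtain ⟨e, he⟩ := hne
    obtain ⟨⟨a, b⟩, rfl⟩ := Quot.exists_rep e
    exact ⟨⟨a, mem_support_of_mem_vsup hd (mem_vsup he (by
      show a ∈ s(a, b); simp))⟩⟩


variable (G : SimpleGraph V)

def ESet (S : Set V) : Set (Sym2 V) := {e | e ∈ G.edgeSet ∧ ∀ v ∈ e, v ∈ S}
def tch (S W : Set V) : Set (Sym2 V) := {e | e ∈ ESet G S ∧ ∃ v ∈ e, v ∈ W}
def ConnOn (S : Set V) : Prop := ∀ a ∈ S, ∀ b ∈ S, SReach (ESet G S) a b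
def comp (S : Set V) (r : V) (a : V) : Set V := {b | SReach (ESet G (S \ {r})) a b}

variable {G}

lemma ESet_mono {S S' : Set V} (h : S ⊆ S') : ESet G S ⊆ ESet G S' :=
  fun e ⟨he, hv⟩ => ⟨he, fun v hv' => h (hv v hv')⟩
lemma vsup_ESet {S : Set V} : vsup (ESet G S) ⊆ S := by
  rintro v ⟨e, ⟨_, hv⟩, hve⟩; exact hv v hve
lemma tch_subset_ESet {S W : Set V} : tch G S W ⊆ ESet G S := fun e he => he.1
lemma tch_mono_right {S W W' : Set V} (h : W ⊆ W') : tch G S W ⊆ tch G S W' :=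
  fun e ⟨he, v, hv, hvW⟩ => ⟨he, v, hv, h hvW⟩
lemma tch_empty {S : Set V} : tch G S (∅ : Set V) = ∅ := by
  ext e; simp [tch]
lemma tch_diff_mono {S' S : Set V} (hS : S' ⊆ S) (W W'' : Set V) :
    tch G S' W \ tch G S' W'' ⊆ tch G S W \ tch G S W'' := by
  rintro e ⟨⟨⟨heg, hes⟩, v, hv, hvW⟩, hne⟩
  refine ⟨⟨⟨heg, fun w hw => hS (hes w hw)⟩, v, hv, hvW⟩, fun ⟨⟨heg', _⟩, w, hw, hwW⟩ => ?_⟩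
  exact hne ⟨⟨heg, hes⟩, w, hw, hwW⟩

lemma exists_mem_ne {e : Sym2 V} (hd : ¬ e.IsDiag) (r : V) : ∃ v ∈ e, v ≠ r := by
  induction e with
  | _ x y =>
    rw [Sym2.isDiag_iff_proj_eq] at hd
    by_cases hx : x = r
    · exact ⟨y, by simp, fun h => hd (by rw [hx, h])⟩
    · exact ⟨x, by simp, hx⟩

/-- every edge inside S touches S \ {r} -/
lemma ESet_eq_tch {S : Set V} (r : V) : ESet G S = tch G S (S \ {r}) := by
  ext e
  refine ⟨fun he => ⟨he, ?_⟩, fun h => h.1⟩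
  obtain ⟨v, hv, hvr⟩ := exists_mem_ne (G.not_isDiag_of_mem_edgeSet he.1) r
  exact ⟨v, hv, he.2 v hv, hvr⟩


section Comp
variable {S : Set V} {r : V}

lemma comp_refl (a : V) : a ∈ comp G S r a := Relation.ReflTransGen.refl

lemma comp_subset {a : V} (ha : a ∈ S \ {r}) : comp G S r a ⊆ S \ {r} := by
  intro b hb
  rcases sreach_endpoint hb with rfl | hbv
  · exact ha
  · exact vsup_ESet hbv

lemma comp_eq_of_mem {a b : V} (hb : b ∈ comp G S r a) : comp G S r b = comp G S r a := by
  ext c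
  exact ⟨fun hc => SReach.trans hb hc, fun hc => SReach.trans (SReach.symm hb) hc⟩

lemma comp_disjoint {a b : V} (hne : comp G S r a ≠ comp G S r b) :
    Disjoint (comp G S r a) (comp G S r b) := by
  rw [Set.disjoint_left]
  intro c hca hcb
  exact hne ((comp_eq_of_mem hca).symm.trans (comp_eq_of_mem hcb))

lemma comp_edge_closed {a u w : V} {e : Sym2 V} (he : e ∈ ESet G (S \ {r}))
    (hu : u ∈ e) (hw : w ∈ e) (hua : u ∈ comp G S r a) : w ∈ comp G S r a :=
  SReach.trans hua (Relation.ReflTransGen.single ⟨e, he, hu, hw⟩)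

/-- every vertex other than `r` in a connected set reaches some vertex `u` in its component
with an edge from `u` to `r`. -/
lemma exists_attach (hconn : ConnOn G S) (hr : r ∈ S) {a : V} (ha : a ∈ S) (har : a ≠ r) :
    ∃ u, u ∈ comp G S r a ∧ s(u, r) ∈ ESet G S := by
  have key : ∀ x, SReach (ESet G S) x r → x ≠ r →
      ∃ u, u ∈ comp G S r x ∧ s(u, r) ∈ ESet G S := by
    intro x hx
    induction hx using Relation.ReflTransGen.head_induction_on with
    | refl => intro h; exact absurd rfl h
    | head hxy hyr ih =>
      rename_i x y
      intro hxr
      obtain ⟨e, he, hx, hy⟩ := hxy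
      by_cases hxy' : x = y
      · subst hxy'
        exact ih hxr
      · have hexy : e = s(x, y) := (Sym2.mem_and_mem_iff hxy').mp ⟨hx, hy⟩
        by_cases hyr' : y = r
        · subst hyr'
          exact ⟨x, comp_refl x, by rwa [← hexy]⟩
        · obtain ⟨u, hu, hur⟩ := ih hyr'
          refine ⟨u, ?_, hur⟩
          have hestep : e ∈ ESet G (S \ {r}) := by
            refine ⟨he.1, fun v hv => ⟨he.2 v hv, ?_⟩⟩
            rw [hexy, Sym2.mem_iff] at hv
            rcases hv with rfl | rfl <;> assumption
          exact SReach.trans (Relation.ReflTransGen.single ⟨e, hestep, hx, hy⟩) hu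
  exact key a (hconn a ha r hr) har

lemma comp_reach_r (hconn : ConnOn G S) (hr : r ∈ S) {a : V} (ha : a ∈ S \ {r})
    {A B : Set V} (hA : comp G S r a ⊆ A) (hB : Disjoint (comp G S r a) B) (hrB : r ∉ B) :
    SReach (tch G S A \ tch G S B) a r := by
  obtain ⟨u, hu, hur⟩ := exists_attach hconn hr ha.1 ha.2
  have h1 : SReach {e ∈ ESet G (S \ {r}) | ∀ v ∈ e, SReach (ESet G (S \ {r})) a v} a u :=
    sreach_lift hu
  have hsub : {e ∈ ESet G (S \ {r}) | ∀ v ∈ e, SReach (ESet G (S \ {r})) a v} ⊆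
      tch G S A \ tch G S B := by
    rintro e ⟨he, hve⟩
    have hcomp : ∀ v ∈ e, v ∈ comp G S r a := fun v hv => hve v hv
    obtain ⟨v, hv⟩ := sym2_exists_mem e
    refine ⟨⟨ESet_mono Set.diff_subset he, v, hv, hA (hcomp v hv)⟩, ?_⟩
    rintro ⟨-, w, hw, hwB⟩
    exact Set.disjoint_left.mp hB (hcomp w hw) hwB
  have h2 : SReach (tch G S A \ tch G S B) a u := (h1.mono hsub)
  refine h2.tail ⟨s(u, r), ⟨⟨hur, u, by simp, hA hu⟩, ?_⟩, by simp, by simp⟩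
  rintro ⟨-, w, hw, hwB⟩
  rw [Sym2.mem_iff] at hw
  rcases hw with rfl | rfl
  · exact Set.disjoint_left.mp hB hu hwB
  · exact hrB hwB

lemma conn_on_comp (hconn : ConnOn G S) {a : V} (ha : a ∈ S \ {r}) :
    ConnOn G (comp G S r a) := by
  intro b hb c hc
  have hbc : SReach (ESet G (S \ {r})) b c := SReach.trans (SReach.symm hb) hc
  have h1 := sreach_lift hbc
  refine h1.mono ?_
  rintro e ⟨he, hve⟩
  refine ⟨he.1, fun v hv => ?_⟩
  exact SReach.trans hb (hve v hv)

end Comp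

lemma ineq41 (d D' : ℕ) (hd : 1 ≤ d) : 1 + d * 4 ^ D' ≤ 4 ^ (d + D') := by
  induction d with
  | zero => omega
  | succ d ih =>
    rcases Nat.eq_or_lt_of_le hd with h1 | h2
    · have h4 : 4 ^ (1 + D') = 4 * 4 ^ D' := by rw [pow_add]; ring
      rw [← h1, h4]
      have : 1 ≤ 4 ^ D' := Nat.one_le_pow _ _ (by norm_num)
      omega
    · have hd' : 1 ≤ d := by omega
      have ih' := ih hd'
      have h4 : 4 ^ (d + 1 + D') = 4 * 4 ^ (d + D') := by
        rw [show d + 1 + D' = (d + D') + 1 by omega, pow_succ]; ring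
      have hp : 4 ^ D' ≤ 4 ^ (d + D') := Nat.pow_le_pow_right (by norm_num) (by omega)
      have hmul : (d + 1) * 4 ^ D' = d * 4 ^ D' + 4 ^ D' := by ring
      omega

lemma chain_lemma [DecidableEq V] (G : SimpleGraph V) :
    ∀ (n : ℕ) (S : Finset V) (r : V), S.card ≤ n → r ∈ S → ConnOn G ↑S →
    ∃ (D : ℕ) (W : ℕ → Set V) (h : ℕ → V),
      W 0 = ↑S \ {r} ∧ (∀ i, D ≤ i → W i = ∅) ∧ (∀ i, i < D → W (i+1) ⊂ W i) ∧
      (∀ i, W i ⊆ ↑S \ {r}) ∧ (∀ i, h i ∉ W i) ∧ h 0 = r ∧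
      (∀ i j a, i < j → a ∈ W i \ W j →
        SReach (tch G ↑S (W i) \ tch G ↑S (W j)) a (h i)) ∧
      S.card ≤ 4 ^ D := by
  intro n
  induction n with
  | zero =>
    intro S r hc hr _
    have : 0 < S.card := Finset.card_pos.mpr ⟨r, hr⟩
    omega
  | succ n IH =>
    intro S r hcard hr hconn
    classical
    by_cases hS1 : S.erase r = ∅
    · -- S = {r}
      have hSr : (↑S : Set V) \ {r} = ∅ := by
        ext x
        simp only [Set.mem_diff, Set.mem_singleton_iff, Set.mem_empty_iff_false, iff_false]
        rintro ⟨hx, hxr⟩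
        exact (Finset.notMem_empty x) (hS1 ▸ Finset.mem_erase.mpr ⟨hxr, hx⟩)
      refine ⟨0, fun _ => ∅, fun _ => r, hSr.symm, fun _ _ => rfl,
        fun i hi => absurd hi (Nat.not_lt_zero i),
        fun i => by simp, fun i => by simp, rfl, ?_, ?_⟩
      · rintro i j a _ ⟨ha, _⟩; exact absurd ha (Set.notMem_empty a)
      · have : S.card = 1 := by
          have := Finset.card_erase_of_mem hr
          have h0 : (S.erase r).card = 0 := by rw [hS1]; rfl
          have : 0 < S.card := Finset.card_pos.mpr ⟨r, hr⟩
          omega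
        simp [this]
    · -- main case
      set E0 := ESet G ((↑S : Set V) \ {r}) with hE0def
      let cp : V → Finset V := fun a => (S.erase r).filter (fun b => SReach E0 a b)
      have hrS : (↑(S.erase r) : Set V) = (↑S : Set V) \ {r} := by
        rw [Finset.coe_erase]
      have hcp_coe : ∀ a, a ∈ S.erase r → (↑(cp a) : Set V) = comp G (↑S) r a := by
        intro a ha
        have haS : a ∈ (↑S : Set V) \ {r} := by rw [← hrS]; exact_mod_cast ha
        ext b
        simp only [cp, Finset.coe_filter, Set.mem_setOf_eq, comp]
        constructor
        · rintro ⟨_, h⟩; exact h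
        · intro h
          refine ⟨?_, h⟩
          have : b ∈ (↑S : Set V) \ {r} := comp_subset haS h
          rw [← hrS] at this; exact_mod_cast this
      let comps : Finset (Finset V) := (S.erase r).image cp
      have hcompsne : comps.Nonempty := by
        obtain ⟨a, ha⟩ := Finset.nonempty_iff_ne_empty.mpr hS1
        exact ⟨cp a, Finset.mem_image_of_mem cp ha⟩
      obtain ⟨C1, hC1mem, hC1max⟩ := comps.exists_max_image (fun C => C.card) hcompsne
      obtain ⟨a1, ha1, hcpa1⟩ := Finset.mem_image.mp hC1mem
      have ha1S : a1 ∈ (↑S : Set V) \ {r} := by rw [← hrS]; exact_mod_cast ha1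
      have hC1coe : (↑C1 : Set V) = comp G (↑S) r a1 := by
        rw [← hcpa1]; exact hcp_coe a1 ha1
      -- properties of components
      have hmem_self : ∀ a ∈ S.erase r, a ∈ cp a := by
        intro a ha
        exact Finset.mem_filter.mpr ⟨ha, Relation.ReflTransGen.refl⟩
      have hcomps_comp : ∀ C ∈ comps, ∃ a ∈ S.erase r, cp a = C ∧ (↑C : Set V) = comp G ↑S r a := by
        intro C hC
        obtain ⟨a, ha, hcpa⟩ := Finset.mem_image.mp hC
        exact ⟨a, ha, hcpa, by rw [← hcpa]; exact hcp_coe a ha⟩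
      have hcomps_sub : ∀ C ∈ comps, (↑C : Set V) ⊆ (↑S : Set V) \ {r} := by
        intro C hC
        obtain ⟨a, ha, _, hcoe⟩ := hcomps_comp C hC
        rw [hcoe]
        exact comp_subset (by rw [← hrS]; exact_mod_cast ha)
      have hcomps_ne : ∀ C ∈ comps, (C : Finset V).Nonempty := by
        intro C hC
        obtain ⟨a, ha, hcpa, _⟩ := hcomps_comp C hC
        exact ⟨a, hcpa ▸ hmem_self a ha⟩
      have hcomps_disj : ∀ C ∈ comps, ∀ C' ∈ comps, C ≠ C' →
          Disjoint (↑C : Set V) (↑C' : Set V) := by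
        intro C hC C' hC' hne
        obtain ⟨a, _, _, hcoe⟩ := hcomps_comp C hC
        obtain ⟨b, _, _, hcoe'⟩ := hcomps_comp C' hC'
        rw [hcoe, hcoe']
        apply comp_disjoint
        intro he
        exact hne (Finset.coe_injective (by rw [hcoe, hcoe', he]))
      -- a vertex in a component determines it
      have hcomp_of_mem : ∀ C ∈ comps, ∀ a, a ∈ C → comp G ↑S r a = (↑C : Set V) := by
        intro C hC a haC
        obtain ⟨b, _, _, hcoe⟩ := hcomps_comp C hC
        have : a ∈ comp G ↑S r b := by rw [← hcoe]; exact_mod_cast haC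
        rw [comp_eq_of_mem this, hcoe]
      -- the attachment vertex r'
      obtain ⟨r', hr'comp, hr'edge⟩ := exists_attach hconn hr ha1S.1 ha1S.2
      have hr'C1 : r' ∈ C1 := by
        have : r' ∈ (↑C1 : Set V) := by rw [hC1coe]; exact hr'comp
        exact_mod_cast this
      -- recursive call on C1
      have hC1subS : C1 ⊆ S.erase r := by rw [← hcpa1]; exact Finset.filter_subset _ _
      have hC1cardlt : C1.card ≤ n := by
        have h1 : C1.card ≤ (S.erase r).card := Finset.card_le_card hC1subS
        have h2 := Finset.card_erase_of_mem hr
        have : 0 < S.card := Finset.card_pos.mpr ⟨r, hr⟩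
        omega
      have hC1conn : ConnOn G (↑C1 : Set V) := by
        rw [hC1coe]; exact conn_on_comp hconn ha1S
      obtain ⟨D', W', h', hW'0, hW'top, hW'strict, hW'sub, hW'hub, hW'hub0, hW'inv, hW'card⟩ :=
        IH C1 r' hC1cardlt hr'C1 hC1conn
      -- the list of other components
      set L : List (Finset V) := (comps.erase C1).toList with hLdef
      set d : ℕ := comps.card with hddef
      have hLlen : L.length = d - 1 := by
        rw [hLdef, Finset.length_toList, Finset.card_erase_of_mem hC1mem]
      have hd1 : 1 ≤ d := Finset.card_pos.mpr hcompsne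
      have hLmem : ∀ C ∈ L, C ∈ comps ∧ C ≠ C1 := by
        intro C hC
        rw [hLdef, Finset.mem_toList] at hC
        exact ⟨Finset.mem_of_mem_erase hC, Finset.ne_of_mem_erase hC⟩
      have hLnodup : L.Nodup := Finset.nodup_toList _
      -- the union of components in the dropped list
      let UL : ℕ → Set V := fun t => {v | ∃ C ∈ L.drop t, v ∈ C}
      have hUL_sub : ∀ t, UL t ⊆ (↑S : Set V) \ {r} := by
        rintro t v ⟨C, hC, hvC⟩
        exact hcomps_sub C (hLmem C (List.drop_subset _ _ hC)).1 (by exact_mod_cast hvC)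
      have hUL_mono : ∀ t t', t ≤ t' → UL t' ⊆ UL t := by
        rintro t t' htt v ⟨C, hC, hvC⟩
        refine ⟨C, ?_, hvC⟩
        have : L.drop t' = (L.drop t).drop (t' - t) := by
          rw [List.drop_drop]; congr 1; omega
        rw [this] at hC
        exact List.drop_subset _ _ hC
      have hUL_C1_disj : ∀ t, Disjoint (↑C1 : Set V) (UL t) := by
        intro t
        rw [Set.disjoint_right]
        rintro v ⟨C, hC, hvC⟩
        have hCc := hLmem C (List.drop_subset _ _ hC)
        intro hvC1
        exact Set.disjoint_left.mp
          (hcomps_disj C hCc.1 C1 hC1mem hCc.2) (by exact_mod_cast hvC) hvC1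
      have hUL_cover : (↑C1 : Set V) ∪ UL 0 = (↑S : Set V) \ {r} := by
        apply Set.Subset.antisymm
        · rintro v (hv | hv)
          · exact hcomps_sub C1 hC1mem hv
          · exact hUL_sub 0 hv
        · intro v hv
          have hv' : v ∈ S.erase r := by
            rw [← hrS] at hv; exact_mod_cast hv
          have hcpv : cp v ∈ comps := Finset.mem_image_of_mem cp hv'
          by_cases hcv : cp v = C1
          · left; rw [← hcv]; exact_mod_cast hmem_self v hv'
          · right
            refine ⟨cp v, ?_, hmem_self v hv'⟩
            rw [List.drop_zero, hLdef, Finset.mem_toList]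
            exact Finset.mem_erase.mpr ⟨hcv, hcpv⟩
      -- define the full chain
      set D : ℕ := d + D' with hDdef
      let W : ℕ → Set V := fun i => if i < d then (↑C1 : Set V) ∪ UL i else W' (i - d)
      let hb : ℕ → V := fun i => if i < d then r else h' (i - d)
      have hWlt : ∀ i, i < d → W i = (↑C1 : Set V) ∪ UL i := fun i hi => if_pos hi
      have hWge : ∀ i, d ≤ i → W i = W' (i - d) := fun i hi => if_neg (by omega)
      have hW'subC1 : ∀ i, W' i ⊆ (↑C1 : Set V) \ {r'} := hW'sub
      have hWsub : ∀ i, W i ⊆ (↑S : Set V) \ {r} := by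
        intro i
        by_cases hi : i < d
        · rw [hWlt i hi]
          rintro v (hv | hv)
          · exact hcomps_sub C1 hC1mem hv
          · exact hUL_sub i hv
        · rw [hWge i (by omega)]
          intro v hv
          have := hW'subC1 (i - d) hv
          exact hcomps_sub C1 hC1mem this.1
      -- C1 is contained in all level-0 sets
      have hC1subW : ∀ i, i < d → (↑C1 : Set V) ⊆ W i := by
        intro i hi; rw [hWlt i hi]; exact Set.subset_union_left
      have coeC1S : (↑C1 : Set V) ⊆ (↑S : Set V) := by
        intro v hv
        have := hcomps_sub C1 hC1mem hv
        exact this.1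
      refine ⟨D, W, hb, ?_, ?_, ?_, hWsub, ?_, ?_, ?_, ?_⟩
      · -- W 0
        rw [hWlt 0 (by omega), hUL_cover]
      · -- top
        intro i hiD
        rw [hWge i (by omega)]
        exact hW'top (i - d) (by omega)
      · -- strictness
        intro i hiD
        rcases Nat.lt_trichotomy (i + 1) d with hlt | heq | hgt
        · -- both level 0
          have hisub : W (i+1) ⊆ W i := by
            rw [hWlt (i+1) hlt, hWlt i (by omega)]
            exact Set.union_subset_union (subset_refl _) (hUL_mono i (i+1) (by omega))
          rw [Set.ssubset_iff_of_subset hisub]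
          have hilen : i < L.length := by omega
          have hdrop : L.drop i = L[i] :: L.drop (i+1) := List.drop_eq_getElem_cons hilen
          have hLiC : L[i] ∈ comps ∧ L[i] ≠ C1 := hLmem _ (List.getElem_mem hilen)
          obtain ⟨a, haLi⟩ := hcomps_ne _ hLiC.1
          refine ⟨a, ?_, ?_⟩
          · rw [hWlt i (by omega)]
            exact Or.inr ⟨L[i], by rw [hdrop]; exact List.mem_cons_self, haLi⟩
          · rw [hWlt (i+1) hlt]
            rintro (hC1 | ⟨C', hC', haC'⟩)
            · exact Set.disjoint_left.mp
                (hcomps_disj _ hLiC.1 C1 hC1mem hLiC.2) (by exact_mod_cast haLi) hC1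
            · have hnd : (L.drop i).Nodup := (List.drop_sublist i L).nodup hLnodup
              rw [hdrop, List.nodup_cons] at hnd
              by_cases hCC : C' = L[i]
              · subst hCC; exact hnd.1 hC'
              · exact Set.disjoint_left.mp
                  (hcomps_disj C' (hLmem C' (List.drop_subset _ _ hC')).1 _ hLiC.1 hCC)
                  (by exact_mod_cast haC') (by exact_mod_cast haLi)
        · -- i + 1 = d
          have hWi : W i = (↑C1 : Set V) := by
            rw [hWlt i (by omega)]
            have : L.drop i = [] := by
              have : i = L.length := by omega
              rw [this, List.drop_length]
            have hULi : UL i = ∅ := by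
              ext v; simp only [UL, this, Set.mem_setOf_eq, List.not_mem_nil,
                Set.mem_empty_iff_false, iff_false]
              rintro ⟨C, hC, _⟩; exact hC
            rw [hULi, Set.union_empty]
          have hWi1 : W (i+1) = (↑C1 : Set V) \ {r'} := by
            rw [heq, hWge d (le_refl d), Nat.sub_self, hW'0]
          rw [hWi, hWi1]
          constructor
          · exact Set.diff_subset
          · intro hsub
            exact (hsub (by exact_mod_cast hr'C1 : r' ∈ (↑C1 : Set V))).2 rfl
        · -- recursion
          have h1 : W (i+1) = W' (i + 1 - d) := hWge (i+1) (by omega)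
          have h2 : W i = W' (i - d) := hWge i (by omega)
          rw [h1, h2, show i + 1 - d = (i - d) + 1 by omega]
          exact hW'strict (i - d) (by omega)
      · -- hubs avoid their sets
        intro i
        by_cases hi : i < d
        · show (if i < d then r else h' (i - d)) ∉ W i
          rw [if_pos hi]
          intro hrWi
          exact (hWsub i hrWi).2 rfl
        · show (if i < d then r else h' (i - d)) ∉ W i
          rw [if_neg hi, hWge i (by omega)]
          exact hW'hub (i - d)
      · -- h 0 = r
        show (if 0 < d then r else h' (0 - d)) = r
        rw [if_pos (by omega)]
      · -- THE INVARIANT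
        intro i j a hij ha
        obtain ⟨haWi, haWj⟩ := ha
        by_cases hi : i < d
        · have hbi : hb i = r := if_pos hi
          rw [hbi]
          rw [hWlt i hi] at haWi
          cases haWi with
          | inr haUL =>
            obtain ⟨C, hCdrop, haC⟩ := haUL
            have hCL := hLmem C (List.drop_subset _ _ hCdrop)
            have hacomp : comp G ↑S r a = (↑C : Set V) := hcomp_of_mem C hCL.1 a haC
            have haS : a ∈ (↑S : Set V) \ {r} := hcomps_sub C hCL.1 (by exact_mod_cast haC)
            apply comp_reach_r hconn hr haS
            · rw [hacomp, hWlt i hi]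
              intro v hv
              exact Or.inr ⟨C, hCdrop, by exact_mod_cast hv⟩
            · rw [hacomp]
              by_cases hj : j < d
              · rw [hWlt j hj]
                refine Set.disjoint_union_right.mpr ⟨?_, ?_⟩
                · exact hcomps_disj C hCL.1 C1 hC1mem hCL.2
                · rw [Set.disjoint_right]
                  rintro v ⟨C', hC', hvC'⟩ hvC
                  by_cases hCC' : C' = C
                  · subst hCC'
                    exact haWj (by rw [hWlt j hj]; exact Or.inr ⟨C', hC', haC⟩)
                  · exact Set.disjoint_left.mp
                      (hcomps_disj C' (hLmem C' (List.drop_subset _ _ hC')).1 C hCL.1 hCC')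
                      (by exact_mod_cast hvC') hvC
              · rw [hWge j (by omega)]
                have hsub : W' (j - d) ⊆ (↑C1 : Set V) :=
                  (hW'subC1 (j - d)).trans Set.diff_subset
                exact Set.disjoint_of_subset_right hsub
                  (hcomps_disj C hCL.1 C1 hC1mem hCL.2)
            · intro hrWj
              exact (hWsub j hrWj).2 rfl
          | inl haC1 =>
            by_cases hj : j < d
            · exact absurd (hC1subW j hj haC1) haWj
            · have hWjeq : W j = W' (j - d) := hWge j (by omega)
              have hedge : s(r', r) ∈ tch G ↑S (W i) \ tch G ↑S (W j) := by
                constructor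
                · exact ⟨hr'edge, r', by simp, hC1subW i hi (by exact_mod_cast hr'C1)⟩
                · rintro ⟨-, w, hw, hwWj⟩
                  rw [Sym2.mem_iff] at hw
                  rcases hw with rfl | rfl
                  · exact ((hW'subC1 (j - d)) (hWjeq ▸ hwWj)).2 rfl
                  · exact ((hWsub j) hwWj).2 rfl
              by_cases har' : a = r'
              · rw [har']
                exact Relation.ReflTransGen.single ⟨s(r', r), hedge, by simp, by simp⟩
              · have haW'0 : a ∈ W' 0 := by
                  rw [hW'0]; exact ⟨haC1, har'⟩
                have hjd : d < j := by
                  by_contra hcon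
                  have hje : j = d := by omega
                  apply haWj
                  rw [hWjeq, hje, Nat.sub_self]
                  exact haW'0
                have hreach := hW'inv 0 (j - d) a (by omega)
                  ⟨haW'0, by rw [← hWjeq]; exact haWj⟩
                rw [hW'hub0] at hreach
                have hlift : tch G ↑C1 (W' 0) \ tch G ↑C1 (W' (j - d)) ⊆
                    tch G ↑S (W i) \ tch G ↑S (W j) := by
                  intro e he
                  have h1 := tch_diff_mono coeC1S (W' 0) (W' (j - d)) he
                  refine ⟨?_, by rw [hWjeq]; exact h1.2⟩
                  refine tch_mono_right ?_ h1.1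
                  rw [hW'0]
                  exact Set.diff_subset.trans (hC1subW i hi)
                exact (hreach.mono hlift).tail ⟨s(r', r), hedge, by simp, by simp⟩
        · -- i ≥ d : lift the recursive invariant
          have hbi : hb i = h' (i - d) := if_neg hi
          have hWieq : W i = W' (i - d) := hWge i (by omega)
          have hWjeq : W j = W' (j - d) := hWge j (by omega)
          rw [hbi]
          have hreach := hW'inv (i - d) (j - d) a (by omega)
            ⟨by rw [← hWieq]; exact haWi, by rw [← hWjeq]; exact haWj⟩
          refine hreach.mono ?_
          rw [hWieq, hWjeq]
          exact tch_diff_mono coeC1S _ _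
      · -- cardinality
        have hsub : S.erase r ⊆ comps.biUnion id := by
          intro a ha
          exact Finset.mem_biUnion.mpr ⟨cp a, Finset.mem_image_of_mem cp ha, hmem_self a ha⟩
        have h1 : (S.erase r).card ≤ ∑ C ∈ comps, C.card :=
          le_trans (Finset.card_le_card hsub) (le_trans Finset.card_biUnion_le (le_of_eq rfl))
        have h2 : ∑ C ∈ comps, C.card ≤ d * C1.card := by
          have := Finset.sum_le_card_nsmul comps (fun C => C.card) C1.card
            (fun C hC => hC1max C hC)
          simpa [smul_eq_mul] using this
        have h3 : C1.card ≤ 4 ^ D' := hW'card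
        have h4 := Finset.card_erase_of_mem hr
        have h0 : 0 < S.card := Finset.card_pos.mpr ⟨r, hr⟩
        have h5 : d * C1.card ≤ d * 4 ^ D' := Nat.mul_le_mul_left d h3
        have h6 := ineq41 d D' hd1
        have h7 : (4:ℕ) ^ D = 4 ^ (d + D') := by rw [hDdef]
        omega


/-- definition matching the target: kEdgeTuples -/
def kEdgeTuples' {V : Type*} (G : SimpleGraph V) (k : ℕ) : Set (Fin k → ℕ) :=
  {m | (∀ i, 1 ≤ m i) ∧ (∀ i j : Fin k, i ≤ j → m j ≤ m i) ∧
    ∃ E : Fin k → Set (Sym2 V), (⋃ i, E i) = G.edgeSet ∧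
      (Pairwise fun i j => Disjoint (E i) (E j)) ∧
      ∀ i, EdgeConn (E i) ∧ (E i).ncard = m i}

lemma sreach_ne_exists_edge {E : Set (Sym2 V)} {a b : V} (h : SReach E a b) (hne : a ≠ b) :
    E.Nonempty := by
  induction h with
  | refl => exact absurd rfl hne
  | tail _ hbc _ => obtain ⟨e, he, _, _⟩ := hbc; exact ⟨e, he⟩

/-- generic: a partition into connected nonempty parts gives a sorted member of kEdgeTuples -/
lemma member_of_partition {V : Type*} (G : SimpleGraph V) (k : ℕ)
    (parts : Fin k → Set (Sym2 V))
    (hcover : (⋃ t, parts t) = G.edgeSet)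
    (hdisj : Pairwise fun t t' => Disjoint (parts t) (parts t'))
    (hconn : ∀ t, EdgeConn (parts t)) (hne : ∀ t, (parts t).Nonempty)
    (hfin : ∀ t, (parts t).Finite) :
    ∃ σ : Equiv.Perm (Fin k),
      (fun t => (parts (σ t)).ncard) ∈ kEdgeTuples' G k := by
  classical
  set c : Fin k → ℕ := fun t => (parts t).ncard with hc
  set σ : Equiv.Perm (Fin k) := (Fin.revPerm : Equiv.Perm (Fin k)).trans (Tuple.sort c) with hσ
  refine ⟨σ, ?_, ?_, ?_⟩
  · intro i
    exact (Set.ncard_pos (hfin _)).mpr (hne _)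
  · intro i j hij
    have hmono := Tuple.monotone_sort c
    have : (σ j : Fin k) = (Tuple.sort c) (Fin.revPerm j) := rfl
    have h1 : c (Tuple.sort c (Fin.revPerm j)) ≤ c (Tuple.sort c (Fin.revPerm i)) := by
      apply hmono
      show (Fin.revPerm j : Fin k) ≤ Fin.revPerm i
      simpa using Fin.rev_le_rev.mpr hij
    exact h1
  · refine ⟨fun t => parts (σ t), ?_, ?_, fun t => ⟨hconn _, rfl⟩⟩
    · rw [← hcover]
      exact σ.surjective.iUnion_comp (fun t => parts t)
    · intro i j hij
      exact hdisj (fun h => hij (σ.injective h))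

section ChainUse
variable [Fintype V] {G : SimpleGraph V}

lemma walk_sreach {a b : V} (w : G.Walk a b) : SReach (ESet G Set.univ) a b := by
  induction w with
  | nil => exact Relation.ReflTransGen.refl
  | cons h p ih =>
    rename_i u v x
    exact Relation.ReflTransGen.head ⟨s(u, v), ⟨h, by simp⟩, by simp, by simp⟩ ih

lemma connOn_univ (hG : G.Preconnected) : ConnOn G (Set.univ : Set V) := by
  intro a _ b _
  obtain ⟨w⟩ := hG a b
  exact walk_sreach w

lemma ESet_univ : ESet G (Set.univ : Set V) = G.edgeSet := by
  ext e; exact ⟨fun h => h.1, fun h => ⟨h, fun _ _ => trivial⟩⟩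

end ChainUse

/-- Main structure extracted at the top level: a strictly decreasing chain of edge sets
`F i` with connected differences. -/
lemma top_chain [Fintype V] (G : SimpleGraph V) (hG : G.Connected) :
    ∃ (D : ℕ) (F : ℕ → Set (Sym2 V)),
      F 0 = G.edgeSet ∧ (∀ i, D ≤ i → F i = ∅) ∧
      (∀ i j, i ≤ j → F j ⊆ F i) ∧
      (∀ i j, i < j → j ≤ D → (F i \ F j).Nonempty) ∧
      (∀ i j, i < j → (F i \ F j).Nonempty → EdgeConn (F i \ F j)) ∧
      (∀ i, F i ⊆ G.edgeSet) ∧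
      Fintype.card V ≤ 4 ^ D := by
  classical
  obtain ⟨r⟩ := hG.nonempty
  have hconn : ConnOn G (↑(Finset.univ : Finset V) : Set V) := by
    rw [Finset.coe_univ]; exact connOn_univ hG.preconnected
  obtain ⟨D, W, hb, hW0, hWtop, hWstrict, hWsub, hWhub, hWhub0, hWinv, hWcard⟩ :=
    chain_lemma G (Finset.univ.card) Finset.univ r (le_refl _) (Finset.mem_univ r) hconn
  -- translate the ambient set to univ
  have huniv : (↑(Finset.univ : Finset V) : Set V) = (Set.univ : Set V) := Finset.coe_univ
  rw [huniv] at hW0 hWsub hWinv hconn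
  set F : ℕ → Set (Sym2 V) := fun i => tch G Set.univ (W i) with hF
  have hWanti : ∀ i j, i ≤ j → W j ⊆ W i := by
    intro i j hij
    induction j with
    | zero => have : i = 0 := by omega
              rw [this]
    | succ j ih =>
      rcases Nat.eq_or_lt_of_le hij with h1 | h2
      · rw [h1]
      · have hj : W (j+1) ⊆ W j := by
          by_cases hjD : j < D
          · exact (hWstrict j hjD).subset
          · rw [hWtop (j+1) (by omega)]
            exact Set.empty_subset _
        exact hj.trans (ih (by omega))
  have hFmono : ∀ i j, i ≤ j → F j ⊆ F i := fun i j hij =>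
    tch_mono_right (hWanti i j hij)
  have hFsub : ∀ i, F i ⊆ G.edgeSet := by
    intro i e he
    exact he.1.1
  have hFdiff_pt : ∀ i j, i < j → ∀ e ∈ F i \ F j, ∃ v ∈ e, v ∈ W i \ W j := by
    rintro i j hij e ⟨⟨hei, v, hv, hvW⟩, hej⟩
    refine ⟨v, hv, hvW, fun hvWj => hej ⟨hei, v, hv, hvWj⟩⟩
  -- nonempty differences
  have hFdiffne : ∀ i j, i < j → j ≤ D → (F i \ F j).Nonempty := by
    intro i j hij hjD
    obtain ⟨a, hai, hai1⟩ : ∃ a, a ∈ W i ∧ a ∉ W (i+1) := by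
      obtain ⟨hsub, hne⟩ := Set.ssubset_iff_of_subset (hWstrict i (by omega)).subset |>.mp
        (hWstrict i (by omega))
      exact ⟨hsub, hne.1, hne.2⟩
    have haij : a ∈ W i \ W j := ⟨hai, fun h => hai1 (hWanti (i+1) j (by omega) h)⟩
    have hr := hWinv i j a hij haij
    have hane : a ≠ hb i := fun h => (hWhub i) (h ▸ haij.1)
    exact sreach_ne_exists_edge hr hane
  -- connected differences
  have hFdiffconn : ∀ i j, i < j → (F i \ F j).Nonempty → EdgeConn (F i \ F j) := by
    intro i j hij hne
    apply edgeConn_of_sreach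
    · intro e he
      exact G.not_isDiag_of_mem_edgeSet (hFsub i he.1)
    · exact hne
    · -- all support vertices reach hb i
      have key : ∀ a ∈ vsup (F i \ F j), SReach (F i \ F j) a (hb i) := by
        rintro a ⟨e, he, hae⟩
        obtain ⟨v, hve, hvW⟩ := hFdiff_pt i j hij e he
        have h1 : SReach (F i \ F j) a v := Relation.ReflTransGen.single ⟨e, he, hae, hve⟩
        exact h1.trans (hWinv i j v hij hvW)
      intro a ha b hbv
      exact (key a ha).trans (key b hbv).symm
  refine ⟨D, F, ?_, ?_, hFmono, hFdiffne, hFdiffconn, hFsub, ?_⟩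
  · rw [hF]
    show tch G Set.univ (W 0) = G.edgeSet
    rw [hW0, ← ESet_eq_tch (G := G) r, ESet_univ]
  · intro i hiD
    show tch G Set.univ (W i) = ∅
    rw [hWtop i hiD, tch_empty]
  · simpa using hWcard


section Count

lemma kEdgeTuples'_finite [Fintype V] (G : SimpleGraph V) (k : ℕ) :
    (kEdgeTuples' G k).Finite := by
  have hsub : kEdgeTuples' G k ⊆ Set.univ.pi (fun _ : Fin k => Set.Iic (G.edgeSet.ncard)) := by
    rintro m ⟨h1, h2, E, hcov, hdisj, hE⟩
    intro i _
    simp only [Set.mem_Iic]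
    rw [← (hE i).2]
    apply Set.ncard_le_ncard _ (Set.toFinite _)
    rw [← hcov]
    exact Set.subset_iUnion E i
  exact (Set.Finite.pi (fun _ => Set.finite_Iic _)).subset hsub

/-- selection function : `0, (elements of A in order), D` -/
noncomputable def uu (k D : ℕ) (A : Finset ℕ) : ℕ → ℕ := fun t =>
  if t = 0 then 0 else if t ≤ k - 1 then (A.sort (· ≤ ·)).getD (t - 1) 0 else D

lemma uu_props {k D : ℕ} (hk : 2 ≤ k) (hD : k ≤ D) {A : Finset ℕ}
    (hA : A ⊆ Finset.Icc 1 (D - 1)) (hcard : A.card = k - 1) :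
    uu k D A 0 = 0 ∧ uu k D A k = D ∧ (∀ t, t < k → uu k D A t < uu k D A (t + 1)) ∧
      (∀ t, uu k D A t ≤ D) ∧
      (∀ i, i < k - 1 → uu k D A (i + 1) = (A.sort (· ≤ ·)).getD i 0) := by
  set l := A.sort (· ≤ ·) with hl
  have hlen : l.length = k - 1 := by rw [hl, Finset.length_sort, hcard]
  have hmem : ∀ i (h : i < k - 1), l.getD i 0 ∈ Finset.Icc 1 (D - 1) := by
    intro i h
    have hi : i < l.length := by omega
    rw [List.getD_eq_getElem l 0 hi]
    exact hA ((Finset.mem_sort _).mp (List.getElem_mem hi))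
  have hlt : ∀ i j (hi : i < l.length) (hj : j < l.length), i < j → l[i] < l[j] := by
    intro i j hi hj hij
    have := (Finset.sortedLT_sort A).getElem_lt_getElem_of_lt (hi := hi) (hj := hj) hij
    exact this
  have hu0 : uu k D A 0 = 0 := by simp [uu]
  have huk : uu k D A k = D := by
    have h1 : ¬ (k = 0) := by omega
    have h2 : ¬ (k ≤ k - 1) := by omega
    simp [uu, h1, h2]
  have humid : ∀ i, i < k - 1 → uu k D A (i + 1) = l.getD i 0 := by
    intro i h
    have h1 : ¬ (i + 1 = 0) := by omega
    have h2 : i + 1 ≤ k - 1 := by omega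
    simp [uu, h1, h2, hl]
  have hbd : ∀ t, uu k D A t ≤ D := by
    intro t
    by_cases h0 : t = 0
    · simp [uu, h0]
    · by_cases h1 : t ≤ k - 1
      · have h2 : t - 1 < k - 1 := by omega
        have := hmem (t - 1) h2
        rw [Finset.mem_Icc] at this
        have heq : uu k D A t = l.getD (t - 1) 0 := by simp [uu, h0, h1, hl]
        omega
      · simp [uu, h0, h1]
  refine ⟨hu0, huk, ?_, hbd, humid⟩
  intro t ht
  by_cases h0 : t = 0
  · subst h0
    rw [hu0, humid 0 (by omega)]
    have := hmem 0 (by omega)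
    rw [Finset.mem_Icc] at this
    omega
  · by_cases h1 : t + 1 ≤ k - 1
    · have e1 : uu k D A t = l.getD (t - 1) 0 := by
        rw [show t = (t - 1) + 1 by omega, humid (t - 1) (by omega)]
        congr 1
      have e2 : uu k D A (t + 1) = l.getD t 0 := humid t (by omega)
      have hb1 : t - 1 < l.length := by omega
      have hb2 : t < l.length := by omega
      rw [e1, e2, List.getD_eq_getElem l 0 hb1, List.getD_eq_getElem l 0 hb2]
      exact hlt (t - 1) t hb1 hb2 (by omega)
    · -- t + 1 = k since t < k
      have htk : t + 1 = k := by omega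
      have ht1 : t ≤ k - 1 := by omega
      have heqt : uu k D A t = l.getD (t - 1) 0 := by simp [uu, h0, ht1, hl]
      have := hmem (t - 1) (by omega)
      rw [Finset.mem_Icc] at this
      rw [heqt, htk, huk]
      omega

lemma recover {k D : ℕ} (hk : 2 ≤ k) (hD : k ≤ D) (s : ℕ → ℕ)
    (hsinj : ∀ i j, i ≤ D → j ≤ D → s i = s j → i = j)
    (hsanti : ∀ i j, i ≤ j → s j ≤ s i) (hsD : s D = 0)
    {A B : Finset ℕ} (hA : A ⊆ Finset.Icc 1 (D-1)) (hAc : A.card = k - 1)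
    (hB : B ⊆ Finset.Icc 1 (D-1)) (hBc : B.card = k - 1)
    (heq : ∀ t, t < k →
      s (uu k D A t) - s (uu k D A (t+1)) = s (uu k D B t) - s (uu k D B (t+1))) :
    A = B := by
  obtain ⟨hA0, hAk, hAmono, hAbd, hAmid⟩ := uu_props hk hD hA hAc
  obtain ⟨hB0, hBk, hBmono, hBbd, hBmid⟩ := uu_props hk hD hB hBc
  have tele : ∀ (u : ℕ → ℕ), u k = D → (∀ t, t < k → u t < u (t+1)) → (∀ t, u t ≤ D) →
      ∀ j, j ≤ k → (∑ x ∈ Finset.Ico (k - j) k, (s (u x) - s (u (x+1)))) = s (u (k - j)) := by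
    intro u huk humono hubd j
    induction j with
    | zero => intro _; rw [Nat.sub_zero]; simp [huk, hsD]
    | succ j ih =>
      intro hjk
      have hlt : k - (j+1) < k := by omega
      rw [Finset.sum_eq_sum_Ico_succ_bot hlt]
      have hstep : k - (j+1) + 1 = k - j := by omega
      rw [hstep, ih (by omega)]
      have hle : s (u (k - j)) ≤ s (u (k - (j+1))) := by
        apply hsanti
        exact le_of_lt (by rw [← hstep]; exact humono _ (by omega))
      omega
  have hsu : ∀ t, t ≤ k → s (uu k D A t) = s (uu k D B t) := by
    intro t htk
    have hA' := tele (uu k D A) hAk hAmono hAbd (k - t) (by omega)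
    have hB' := tele (uu k D B) hBk hBmono hBbd (k - t) (by omega)
    have hkk : k - (k - t) = t := by omega
    rw [hkk] at hA' hB'
    rw [← hA', ← hB']
    apply Finset.sum_congr rfl
    intro x hx
    rw [Finset.mem_Ico] at hx
    exact heq x hx.2
  have huu : ∀ t, t ≤ k → uu k D A t = uu k D B t := fun t htk =>
    hsinj _ _ (hAbd t) (hBbd t) (hsu t htk)
  have hlist : A.sort (· ≤ ·) = B.sort (· ≤ ·) := by
    apply List.ext_getElem
    · rw [Finset.length_sort, Finset.length_sort, hAc, hBc]
    · intro n h1 h2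
      have hn : n < k - 1 := by rwa [Finset.length_sort, hAc] at h1
      have e1 := hAmid n hn
      have e2 := hBmid n hn
      have h3 := huu (n+1) (by omega)
      rw [e1, e2] at h3
      rw [← List.getD_eq_getElem _ 0 h1, ← List.getD_eq_getElem _ 0 h2]
      exact h3
  have h4 := congrArg List.toFinset hlist
  rwa [Finset.sort_toFinset, Finset.sort_toFinset] at h4

lemma count_lower [Fintype V] (G : SimpleGraph V) (hG : G.Connected) (k : ℕ) (hk : 2 ≤ k) :
    ∃ D : ℕ, Fintype.card V ≤ 4 ^ D ∧
      (k ≤ D → (D - 1).choose (k - 1) ≤ (kEdgeTuples' G k).ncard * k.factorial) := by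
  classical
  obtain ⟨D, F, hF0, hFtop, hFmono, hFdne, hFdconn, hFsub, hcard⟩ := top_chain G hG
  refine ⟨D, hcard, ?_⟩
  intro hkD
  set s : ℕ → ℕ := fun i => (F i).ncard with hsdef
  have hFfin : ∀ i, (F i).Finite := fun i => (Set.toFinite G.edgeSet).subset (hFsub i)
  have hsanti : ∀ i j, i ≤ j → s j ≤ s i := fun i j hij =>
    Set.ncard_le_ncard (hFmono i j hij) (hFfin i)
  have hslt : ∀ i j, i < j → j ≤ D → s j < s i := by
    intro i j hij hjD
    apply Set.ncard_lt_ncard _ (hFfin i)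
    constructor
    · exact hFmono i j (le_of_lt hij)
    · intro hsub
      obtain ⟨e, he⟩ := hFdne i j hij hjD
      exact he.2 (hsub he.1)
  have hsinj : ∀ i j, i ≤ D → j ≤ D → s i = s j → i = j := by
    intro i j hi hj hsij
    rcases Nat.lt_trichotomy i j with h | h | h
    · have := hslt i j h hj; omega
    · exact h
    · have := hslt j i h hi; omega
  have hsD : s D = 0 := by
    show (F D).ncard = 0
    rw [hFtop D (le_refl D)]
    simp
  set 𝒜 := Finset.powersetCard (k-1) (Finset.Icc 1 (D-1)) with h𝒜
  have key : ∀ A, A ∈ 𝒜 →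
      ∃ mσ : (Fin k → ℕ) × Equiv.Perm (Fin k), mσ.1 ∈ kEdgeTuples' G k ∧
        ∀ t : Fin k, mσ.1 t =
          s (uu k D A ((mσ.2 t) : ℕ)) - s (uu k D A (((mσ.2 t) : ℕ) + 1)) := by
    intro A hA
    rw [h𝒜, Finset.mem_powersetCard] at hA
    obtain ⟨hu0, huk, humono, hubd, -⟩ := uu_props hk hkD hA.1 hA.2
    set u := uu k D A with hu
    have humono' : ∀ a b, a ≤ b → b ≤ k → u a ≤ u b := by
      intro a b hab hbk
      induction b with
      | zero =>
        have : a = 0 := by omega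
        rw [this]
      | succ b ih =>
        rcases Nat.eq_or_lt_of_le hab with h1 | h2
        · rw [h1]
        · exact le_trans (ih (by omega) (by omega)) (le_of_lt (humono b (by omega)))
    set parts : Fin k → Set (Sym2 V) := fun t => F (u t.val) \ F (u (t.val + 1))
      with hparts
    have hpartsub : ∀ t, parts t ⊆ G.edgeSet := fun t e he => hFsub _ he.1
    have hpartne : ∀ t : Fin k, (parts t).Nonempty := fun t =>
      hFdne _ _ (humono t.val t.isLt) (hubd (t.val+1))
    have hcover : (⋃ t, parts t) = G.edgeSet := by
      apply Set.Subset.antisymm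
      · exact Set.iUnion_subset fun t => hpartsub t
      · intro e he
        have hex : ∃ t : ℕ, e ∉ F (u (t + 1)) := by
          refine ⟨k - 1, ?_⟩
          rw [show (k - 1) + 1 = k by omega, huk, hFtop D (le_refl D)]
          exact Set.notMem_empty e
        have ht0lt : Nat.find hex < k := by
          have h1 : Nat.find hex ≤ k - 1 := Nat.find_le (by
            rw [show (k - 1) + 1 = k by omega, huk, hFtop D (le_refl D)]
            exact Set.notMem_empty e)
          omega
        have hin : e ∈ F (u (Nat.find hex)) := by
          rcases Nat.eq_zero_or_pos (Nat.find hex) with h0 | h0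
          · rw [h0, hu0, hF0]; exact he
          · have hmin := Nat.find_min hex (m := Nat.find hex - 1) (by omega)
            push_neg at hmin
            rwa [show Nat.find hex - 1 + 1 = Nat.find hex by omega] at hmin
        exact Set.mem_iUnion.mpr ⟨⟨Nat.find hex, ht0lt⟩, hin, Nat.find_spec hex⟩
    have hdisj : Pairwise fun t t' : Fin k => Disjoint (parts t) (parts t') := by
      have haux : ∀ t t' : Fin k, (t:ℕ) < (t':ℕ) → Disjoint (parts t) (parts t') := by
        intro t t' htt
        rw [Set.disjoint_left]
        rintro e ⟨hei, hei1⟩ ⟨he'i, he'j⟩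
        exact hei1 (hFmono (u (t.val+1)) (u t'.val)
          (humono' _ _ (by omega) (by omega)) he'i)
      intro t t' hne
      rcases Nat.lt_or_ge (t:ℕ) (t':ℕ) with h | h
      · exact haux t t' h
      · have hne' : (t':ℕ) < (t:ℕ) := by
          have : (t:ℕ) ≠ (t':ℕ) := fun hc => hne (Fin.ext hc)
          omega
        exact (haux t' t hne').symm
    have hfin : ∀ t, (parts t).Finite := fun t => (Set.toFinite _).subset (hpartsub t)
    have hconn : ∀ t, EdgeConn (parts t) := fun t =>
      hFdconn _ _ (humono t.val t.isLt) (hpartne t)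
    obtain ⟨σ, hmem⟩ := member_of_partition G k parts hcover hdisj hconn hpartne hfin
    refine ⟨⟨fun t => (parts (σ t)).ncard, σ⟩, hmem, ?_⟩
    intro t
    show (parts (σ t)).ncard = _
    rw [show parts (σ t) = F (u ((σ t) : ℕ)) \ F (u (((σ t) : ℕ) + 1)) from rfl]
    exact Set.ncard_diff
      (hFmono _ _ (le_of_lt (humono _ (σ t).isLt))) (hFfin _)
  choose Φ hΦmem hΦeq using key
  have hTfin : (kEdgeTuples' G k).Finite := kEdgeTuples'_finite G k
  set f : Finset ℕ → (Fin k → ℕ) × Equiv.Perm (Fin k) := fun A =>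
    if h : A ∈ 𝒜 then Φ A h else ⟨fun _ => 0, Equiv.refl _⟩ with hf
  have hmaps : ∀ A ∈ 𝒜, f A ∈ hTfin.toFinset ×ˢ (Finset.univ : Finset (Equiv.Perm (Fin k))) := by
    intro A hA
    rw [Finset.mem_product]
    refine ⟨?_, Finset.mem_univ _⟩
    rw [hf]
    simp only [dif_pos hA]
    rw [Set.Finite.mem_toFinset]
    exact hΦmem A hA
  have hinj : Set.InjOn f ↑𝒜 := by
    intro A hA B hB hfAB
    have hA' : A ∈ 𝒜 := hA
    have hB' : B ∈ 𝒜 := hB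
    rw [hf] at hfAB
    simp only [dif_pos hA', dif_pos hB'] at hfAB
    have hm : (Φ A hA').1 = (Φ B hB').1 := congrArg Prod.fst hfAB
    have hσ : (Φ A hA').2 = (Φ B hB').2 := congrArg Prod.snd hfAB
    have hA2 := hA'
    have hB2 := hB'
    rw [h𝒜, Finset.mem_powersetCard] at hA2 hB2
    apply recover hk hkD s hsinj hsanti hsD hA2.1 hA2.2 hB2.1 hB2.2
    intro t ht
    have e1 := hΦeq A hA' (((Φ A hA').2)⁻¹ ⟨t, ht⟩)
    have e2 := hΦeq B hB' (((Φ A hA').2)⁻¹ ⟨t, ht⟩)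
    rw [← hσ] at e2
    rw [Equiv.Perm.inv_def, Equiv.apply_symm_apply] at e1 e2
    rw [← e1, ← e2, hm]
  have hcount := Finset.card_le_card_of_injOn f hmaps hinj
  rw [Finset.card_product, Finset.card_univ, Fintype.card_perm, Fintype.card_fin] at hcount
  rw [h𝒜, Finset.card_powersetCard, Nat.card_Icc] at hcount
  have hTcard : hTfin.toFinset.card = (kEdgeTuples' G k).ncard :=
    (Set.ncard_eq_toFinset_card _ hTfin).symm
  rw [hTcard] at hcount
  have harg : D - 1 + 1 - 1 = D - 1 := by omega
  rw [harg] at hcount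
  exact hcount

end Count

section Peel

/-- connectivity of an edge set, in SReach terms -/
def EConnV (E : Set (Sym2 V)) : Prop := ∀ a ∈ vsup E, ∀ b ∈ vsup E, SReach E a b

lemma econnv_singleton (e : Sym2 V) : EConnV ({e} : Set (Sym2 V)) := by
  rintro a ⟨f, hf, haf⟩ b ⟨g, hg, hbg⟩
  rw [Set.mem_singleton_iff] at hf hg
  exact Relation.ReflTransGen.single ⟨e, rfl, hf ▸ haf, hg ▸ hbg⟩

lemma econnv_of_connOn {G : SimpleGraph V} {X : Set V} (h : ConnOn G X) :
    EConnV (ESet G X) := by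
  intro a ha b hb
  exact h a (vsup_ESet ha) b (vsup_ESet hb)

lemma edgeConn_of_econnv {G : SimpleGraph V} {E : Set (Sym2 V)} (hsub : E ⊆ G.edgeSet)
    (hne : E.Nonempty) (h : EConnV E) : EdgeConn E :=
  edgeConn_of_sreach (fun e he => G.not_isDiag_of_mem_edgeSet (hsub he)) hne h

lemma econnv_union {A B : Set (Sym2 V)} {r : V} (hA : EConnV A) (hB : EConnV B)
    (hrA : r ∈ vsup A) (hrB : r ∈ vsup B) : EConnV (A ∪ B) := by
  have key : ∀ a ∈ vsup (A ∪ B), SReach (A ∪ B) a r := by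
    rintro a ⟨e, he, hae⟩
    cases he with
    | inl h => exact (hA a ⟨e, h, hae⟩ r hrA).mono Set.subset_union_left
    | inr h => exact (hB a ⟨e, h, hae⟩ r hrB).mono Set.subset_union_right
  intro a ha b hb
  exact (key a ha).trans (key b hb).symm

/-- union of a list of sets -/
def ulist (l : List (Set (Sym2 V))) : Set (Sym2 V) := l.foldr (· ∪ ·) ∅

lemma mem_ulist {l : List (Set (Sym2 V))} {e : Sym2 V} :
    e ∈ ulist l ↔ ∃ X ∈ l, e ∈ X := by
  induction l with
  | nil => simp [ulist]
  | cons X l ih =>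
    show e ∈ X ∪ ulist l ↔ _
    simp only [Set.mem_union, ih, List.mem_cons]
    constructor
    · rintro (h | ⟨Y, hY, hY2⟩)
      · exact ⟨X, Or.inl rfl, h⟩
      · exact ⟨Y, Or.inr hY, hY2⟩
    · rintro ⟨Y, (rfl | hY), h2⟩
      · exact Or.inl h2
      · exact Or.inr ⟨Y, hY, h2⟩

lemma ulist_append (l1 l2 : List (Set (Sym2 V))) :
    ulist (l1 ++ l2) = ulist l1 ∪ ulist l2 := by
  ext e
  simp only [mem_ulist, Set.mem_union, List.mem_append]
  constructor
  · rintro ⟨X, (h | h), h2⟩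
    · exact Or.inl ⟨X, h, h2⟩
    · exact Or.inr ⟨X, h, h2⟩
  · rintro (⟨X, h, h2⟩ | ⟨X, h, h2⟩)
    · exact ⟨X, Or.inl h, h2⟩
    · exact ⟨X, Or.inr h, h2⟩

lemma ulist_subset {l : List (Set (Sym2 V))} {E : Set (Sym2 V)}
    (h : ∀ X ∈ l, X ⊆ E) : ulist l ⊆ E := by
  intro e he
  obtain ⟨X, hX, heX⟩ := mem_ulist.mp he
  exact h X hX heX

lemma disjoint_ulist {X : Set (Sym2 V)} {l : List (Set (Sym2 V))}
    (h : ∀ Y ∈ l, Disjoint X Y) : Disjoint X (ulist l) := by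
  rw [Set.disjoint_right]
  intro e he heX
  obtain ⟨Y, hY, heY⟩ := mem_ulist.mp he
  exact Set.disjoint_left.mp (h Y hY) heX heY

lemma ulist_finite {l : List (Set (Sym2 V))} (h : ∀ X ∈ l, X.Finite) :
    (ulist l).Finite := by
  induction l with
  | nil => exact Set.finite_empty
  | cons X l ih =>
    show (X ∪ ulist l).Finite
    exact (h X (by simp)).union (ih (fun Y hY => h Y (by simp [hY])))

lemma ulist_ncard {l : List (Set (Sym2 V))} (hfin : ∀ X ∈ l, X.Finite)
    (hdisj : l.Pairwise Disjoint) : (ulist l).ncard = (l.map Set.ncard).sum := by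
  induction l with
  | nil => simp [ulist]
  | cons X l ih =>
    rw [List.pairwise_cons] at hdisj
    have h1 : Disjoint X (ulist l) := disjoint_ulist hdisj.1
    show (X ∪ ulist l).ncard = _
    rw [Set.ncard_union_eq h1 (hfin X (by simp))
      (ulist_finite (fun Y hY => hfin Y (by simp [hY])))]
    rw [List.map_cons, List.sum_cons, ih (fun Y hY => hfin Y (by simp [hY])) hdisj.2]

lemma length_le_sum (l : List ℕ) (h : ∀ x ∈ l, 1 ≤ x) : l.length ≤ l.sum := by
  induction l with
  | nil => simp
  | cons x l ih =>
    simp only [List.length_cons, List.sum_cons]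
    have := h x (by simp)
    have := ih (fun y hy => h y (by simp [hy]))
    omega

lemma quota_list : ∀ (ms : List ℕ), (∀ x ∈ ms, 1 ≤ x) → ∀ k, ms.length ≤ k → k ≤ ms.sum →
    ∃ qs : List ℕ, qs.length = ms.length ∧ qs.sum = k ∧
      (∀ i (h1 : i < qs.length) (h2 : i < ms.length), 1 ≤ qs[i] ∧ qs[i] ≤ ms[i]) := by
  intro ms
  induction ms with
  | nil =>
    intro _ k h1 h2
    exact ⟨[], rfl, by simp at h1 h2 ⊢; omega, fun i h1 h2 => by simp at h1⟩
  | cons m ms ih =>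
    intro hpos k hlen hsum
    simp only [List.length_cons, List.sum_cons] at hlen hsum
    have hm1 : 1 ≤ m := hpos m (by simp)
    have hlensum : ms.length ≤ ms.sum := length_le_sum ms (fun y hy => hpos y (by simp [hy]))
    set q1 := min m (k - ms.length) with hq1
    have hq1pos : 1 ≤ q1 := by
      rw [hq1]; omega
    obtain ⟨qs, hqlen, hqsum, hqel⟩ := ih (fun y hy => hpos y (by simp [hy])) (k - q1)
      (by omega) (by omega)
    refine ⟨q1 :: qs, by simp [hqlen], by simp [hqsum]; omega, ?_⟩
    intro i h1 h2
    match i with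
    | 0 => simp; omega
    | Nat.succ j =>
      simp only [List.getElem_cons_succ]
      exact hqel j (by simpa using h1) (by simpa using h2)

end Peel

section PeelMain

lemma pairwise_disjoint_map_of_nodup {α : Type*} (f : α → Set (Sym2 V)) (l : List α)
    (P : α → Prop) (hmem : ∀ x ∈ l, P x) (hnd : l.Nodup)
    (h : ∀ x y, P x → P y → x ≠ y → Disjoint (f x) (f y)) :
    (l.map f).Pairwise Disjoint := by
  induction l with
  | nil => simp
  | cons x l ih =>
    rw [List.map_cons, List.pairwise_cons]
    rw [List.nodup_cons] at hnd
    constructor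
    · rintro Y hY
      obtain ⟨y, hy, rfl⟩ := List.mem_map.mp hY
      exact h x y (hmem x (by simp)) (hmem y (by simp [hy])) (fun hc => hnd.1 (hc ▸ hy))
    · exact ih (fun z hz => hmem z (by simp [hz])) hnd.2

lemma econnv_ulist {r : V} : ∀ (l : List (Set (Sym2 V))), l ≠ [] →
    (∀ X ∈ l, EConnV X ∧ r ∈ vsup X) → EConnV (ulist l) := by
  intro l
  induction l with
  | nil => intro h; exact absurd rfl h
  | cons X l ih =>
    intro _ hX
    by_cases hl : l = []
    · subst hl
      show EConnV (X ∪ ulist [])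
      have : ulist ([] : List (Set (Sym2 V))) = ∅ := rfl
      rw [this, Set.union_empty]
      exact (hX X (by simp)).1
    · have h1 := hX X (by simp)
      have h2 := ih hl (fun Y hY => hX Y (by simp [hY]))
      show EConnV (X ∪ ulist l)
      refine econnv_union h1.1 h2 h1.2 ?_
      obtain ⟨Y, hY⟩ := List.exists_mem_of_ne_nil l hl
      obtain ⟨e, he, hre⟩ := (hX Y (by simp [hY])).2
      exact ⟨e, mem_ulist.mpr ⟨Y, hY, he⟩, hre⟩

lemma ESet_finite (G : SimpleGraph V) (S : Finset V) : (ESet G (↑S : Set V)).Finite := by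
  apply Set.Finite.subset (Set.Finite.image (fun p : V × V => s(p.1, p.2))
    (((S : Set V).toFinite).prod ((S : Set V).toFinite)))
  intro e he
  obtain ⟨⟨a, b⟩, rfl⟩ := Quot.exists_rep e
  have ha : a ∈ (S : Set V) := he.2 a (by show a ∈ s(a,b); simp)
  have hb : b ∈ (S : Set V) := he.2 b (by show b ∈ s(a,b); simp)
  exact ⟨(a, b), ⟨ha, hb⟩, rfl⟩

lemma peel [DecidableEq V] (G : SimpleGraph V) :
    ∀ (n : ℕ) (S : Finset V), S.card ≤ n → ConnOn G ↑S →
    ∀ k, 1 ≤ k → k ≤ (ESet G (↑S : Set V)).ncard →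
    ∃ l : List (Set (Sym2 V)), l.length = k ∧ ulist l = ESet G (↑S : Set V) ∧
      l.Pairwise Disjoint ∧ ∀ Q ∈ l, Q.Nonempty ∧ EConnV Q := by
  intro n
  induction n with
  | zero =>
    intro S hcard _ k hk1 hkm
    have hS : S = ∅ := Finset.card_eq_zero.mp (by omega)
    have hE : ESet G (↑S : Set V) = ∅ := by
      ext e
      simp only [Set.mem_empty_iff_false, iff_false]
      intro he
      obtain ⟨v, hv⟩ := sym2_exists_mem e
      have := he.2 v hv
      rw [hS] at this
      simpa using this
    rw [hE] at hkm
    simp at hkm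
    omega
  | succ n IH =>
    intro S hcard hconn k hk1 hkm
    classical
    have hfinE : (ESet G (↑S : Set V)).Finite := ESet_finite G S
    by_cases hk1' : k = 1
    · subst hk1'
      refine ⟨[ESet G (↑S : Set V)], rfl, ?_, by simp, ?_⟩
      · show ESet G (↑S : Set V) ∪ ulist [] = ESet G (↑S : Set V)
        have : ulist ([] : List (Set (Sym2 V))) = ∅ := rfl
        rw [this, Set.union_empty]
      · intro Q hQ
        rw [List.mem_singleton] at hQ
        subst hQ
        exact ⟨Set.nonempty_of_ncard_ne_zero (by omega), econnv_of_connOn hconn⟩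
    -- k ≥ 2
    have hk2 : 2 ≤ k := by omega
    have hEne : (ESet G (↑S : Set V)).Nonempty := Set.nonempty_of_ncard_ne_zero (by
      have := hfinE
      omega)
    obtain ⟨e0, he0⟩ := hEne
    obtain ⟨r, hre0⟩ := sym2_exists_mem e0
    have hr : r ∈ S := by exact_mod_cast he0.2 r hre0
    have hS1 : S.erase r ≠ ∅ := by
      obtain ⟨b, hb, he0b⟩ := exists_other_endpoint (G.not_isDiag_of_mem_edgeSet he0.1) hre0
      intro hcon
      have hbS : b ∈ S := by
        have : b ∈ e0 := by rw [he0b]; simp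
        exact_mod_cast he0.2 b this
      exact (Finset.notMem_empty b) (hcon ▸ Finset.mem_erase.mpr ⟨hb, hbS⟩)
    -- component machinery
    set E0 := ESet G ((↑S : Set V) \ {r}) with hE0def
    let cp : V → Finset V := fun a => (S.erase r).filter (fun b => SReach E0 a b)
    have hrS : (↑(S.erase r) : Set V) = (↑S : Set V) \ {r} := by
      rw [Finset.coe_erase]
    have hcp_coe : ∀ a, a ∈ S.erase r → (↑(cp a) : Set V) = comp G (↑S) r a := by
      intro a ha
      have haS : a ∈ (↑S : Set V) \ {r} := by rw [← hrS]; exact_mod_cast ha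
      ext b
      simp only [cp, Finset.coe_filter, Set.mem_setOf_eq, comp]
      constructor
      · rintro ⟨_, h⟩; exact h
      · intro h
        refine ⟨?_, h⟩
        have : b ∈ (↑S : Set V) \ {r} := comp_subset haS h
        rw [← hrS] at this; exact_mod_cast this
    let comps : Finset (Finset V) := (S.erase r).image cp
    have hcompsne : comps.Nonempty := by
      obtain ⟨a, ha⟩ := Finset.nonempty_iff_ne_empty.mpr hS1
      exact ⟨cp a, Finset.mem_image_of_mem cp ha⟩
    have hmem_self : ∀ a ∈ S.erase r, a ∈ cp a := by
      intro a ha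
      exact Finset.mem_filter.mpr ⟨ha, Relation.ReflTransGen.refl⟩
    have hcomps_comp : ∀ C ∈ comps, ∃ a ∈ S.erase r, cp a = C ∧ (↑C : Set V) = comp G ↑S r a := by
      intro C hC
      obtain ⟨a, ha, hcpa⟩ := Finset.mem_image.mp hC
      exact ⟨a, ha, hcpa, by rw [← hcpa]; exact hcp_coe a ha⟩
    have hcomps_sub : ∀ C ∈ comps, (↑C : Set V) ⊆ (↑S : Set V) \ {r} := by
      intro C hC
      obtain ⟨a, ha, _, hcoe⟩ := hcomps_comp C hC
      rw [hcoe]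
      exact comp_subset (by rw [← hrS]; exact_mod_cast ha)
    have hcomps_ne : ∀ C ∈ comps, (C : Finset V).Nonempty := by
      intro C hC
      obtain ⟨a, ha, hcpa, _⟩ := hcomps_comp C hC
      exact ⟨a, hcpa ▸ hmem_self a ha⟩
    have hcomps_disj : ∀ C ∈ comps, ∀ C' ∈ comps, C ≠ C' →
        Disjoint (↑C : Set V) (↑C' : Set V) := by
      intro C hC C' hC' hne
      obtain ⟨a, _, _, hcoe⟩ := hcomps_comp C hC
      obtain ⟨b, _, _, hcoe'⟩ := hcomps_comp C' hC'
      rw [hcoe, hcoe']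
      apply comp_disjoint
      intro he
      exact hne (Finset.coe_injective (by rw [hcoe, hcoe', he]))
    have hcomp_of_mem : ∀ C ∈ comps, ∀ a, a ∈ C → comp G ↑S r a = (↑C : Set V) := by
      intro C hC a haC
      obtain ⟨b, _, _, hcoe⟩ := hcomps_comp C hC
      have : a ∈ comp G ↑S r b := by rw [← hcoe]; exact_mod_cast haC
      rw [comp_eq_of_mem this, hcoe]
    set d : ℕ := comps.card with hddef
    have hd1 : 1 ≤ d := Finset.card_pos.mpr hcompsne
    -- single-component edge sets
    set PC : Finset V → Set (Sym2 V) := fun C => ESet G ((↑C : Set V) ∪ {r}) with hPCdef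
    have hPCsub : ∀ C ∈ comps, PC C ⊆ ESet G (↑S : Set V) := by
      intro C hC
      apply ESet_mono
      rintro v (hv | hv)
      · exact (hcomps_sub C hC hv).1
      · rw [hv]; exact_mod_cast hr
    have hPCconn : ∀ C ∈ comps, ConnOn G ((↑C : Set V) ∪ {r}) := by
      intro C hC
      have key : ∀ z ∈ (↑C : Set V) ∪ {r}, SReach (ESet G ((↑C : Set V) ∪ {r})) z r := by
        rintro z (hz | hz)
        · have hzS : z ∈ (↑S : Set V) \ {r} := hcomps_sub C hC hz
          obtain ⟨u, hu, hur⟩ := exists_attach hconn hr hzS.1 hzS.2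
          have hcompz : comp G ↑S r z = (↑C : Set V) := hcomp_of_mem C hC z (by exact_mod_cast hz)
          have h1 : SReach {e ∈ ESet G ((↑S:Set V) \ {r}) |
              ∀ v ∈ e, SReach (ESet G ((↑S:Set V) \ {r})) z v} z u := sreach_lift hu
          have hsub : {e ∈ ESet G ((↑S:Set V) \ {r}) |
              ∀ v ∈ e, SReach (ESet G ((↑S:Set V) \ {r})) z v} ⊆
              ESet G ((↑C : Set V) ∪ {r}) := by
            rintro e ⟨he, hve⟩
            refine ⟨he.1, fun v hv => Or.inl ?_⟩
            rw [← hcompz]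
            exact hve v hv
          refine (h1.mono hsub).tail ⟨s(u, r), ?_, by simp, by simp⟩
          refine ⟨hur.1, ?_⟩
          intro v hv
          rw [Sym2.mem_iff] at hv
          rcases hv with rfl | rfl
          · left; rw [← hcompz]; exact hu
          · right; rfl
        · rw [hz]
          exact Relation.ReflTransGen.refl
      intro x hx y hy
      exact (key x hx).trans (key y hy).symm
    have hPCr : ∀ C ∈ comps, ∃ u, u ∈ C ∧ s(u, r) ∈ PC C := by
      intro C hC
      obtain ⟨a, ha, hcpa, hcoe⟩ := hcomps_comp C hC
      have haS : a ∈ (↑S : Set V) \ {r} := by rw [← hrS]; exact_mod_cast ha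
      obtain ⟨u, hu, hur⟩ := exists_attach hconn hr haS.1 haS.2
      have huC : u ∈ C := by
        have : u ∈ (↑C : Set V) := by rw [hcoe]; exact hu
        exact_mod_cast this
      refine ⟨u, huC, ⟨hur.1, ?_⟩⟩
      intro v hv
      rw [Sym2.mem_iff] at hv
      rcases hv with rfl | rfl
      · left; exact_mod_cast huC
      · right; rfl
    have hPCne : ∀ C ∈ comps, (PC C).Nonempty := by
      intro C hC
      obtain ⟨u, _, hu⟩ := hPCr C hC
      exact ⟨_, hu⟩
    have hPCrin : ∀ C ∈ comps, r ∈ vsup (PC C) := by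
      intro C hC
      obtain ⟨u, _, hu⟩ := hPCr C hC
      exact ⟨s(u, r), hu, by simp⟩
    have hPCecv : ∀ C ∈ comps, EConnV (PC C) := by
      intro C hC
      exact econnv_of_connOn (hPCconn C hC)
    have hPCdisj : ∀ C, C ∈ comps → ∀ C', C' ∈ comps → C ≠ C' → Disjoint (PC C) (PC C') := by
      intro C hC C' hC' hne
      rw [Set.disjoint_left]
      intro e he he'
      obtain ⟨v, hv, hvr⟩ := exists_mem_ne (G.not_isDiag_of_mem_edgeSet he.1) r
      have hvC : v ∈ (↑C : Set V) := by
        rcases he.2 v hv with h | h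
        · exact h
        · exact absurd h hvr
      have hvC' : v ∈ (↑C' : Set V) := by
        rcases he'.2 v hv with h | h
        · exact h
        · exact absurd h hvr
      exact Set.disjoint_left.mp (hcomps_disj C hC C' hC' hne) hvC hvC'
    have hPCcover : ∀ e ∈ ESet G (↑S : Set V), ∃ C ∈ comps, e ∈ PC C := by
      intro e he
      by_cases hrme : r ∈ e
      · obtain ⟨b, hbr, heb⟩ := exists_other_endpoint (G.not_isDiag_of_mem_edgeSet he.1) hrme
        have hbS : b ∈ S.erase r := by
          refine Finset.mem_erase.mpr ⟨hbr, ?_⟩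
          have : b ∈ e := by rw [heb]; simp
          exact_mod_cast he.2 b this
        refine ⟨cp b, Finset.mem_image_of_mem cp hbS, he.1, ?_⟩
        intro v hv
        rw [heb, Sym2.mem_iff] at hv
        rcases hv with h | h
        · exact Or.inr h
        · left
          rw [hcp_coe b hbS, h]
          exact comp_refl b
      · have heE0 : e ∈ E0 := by
          refine ⟨he.1, fun v hv => ⟨he.2 v hv, fun hc => hrme (hc ▸ hv)⟩⟩
        obtain ⟨v0, hv0⟩ := sym2_exists_mem e
        have hv0S : v0 ∈ S.erase r := by
          have := heE0.2 v0 hv0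
          rw [← hrS] at this
          exact_mod_cast this
        refine ⟨cp v0, Finset.mem_image_of_mem cp hv0S, he.1, ?_⟩
        intro v hv
        left
        rw [hcp_coe v0 hv0S]
        exact comp_edge_closed heE0 hv0 hv (comp_refl v0)
    set lc : List (Finset V) := comps.toList with hlcdef
    have hlcnd : lc.Nodup := Finset.nodup_toList _
    have hlcmem : ∀ C ∈ lc, C ∈ comps := fun C hC => Finset.mem_toList.mp hC
    have hlclen : lc.length = d := Finset.length_toList _
    have hcoverlist : ulist (lc.map PC) = ESet G (↑S : Set V) := by
      ext e
      rw [mem_ulist]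
      constructor
      · rintro ⟨X, hX, heX⟩
        obtain ⟨C, hC, rfl⟩ := List.mem_map.mp hX
        exact hPCsub C (hlcmem C hC) heX
      · intro he
        obtain ⟨C, hC, heC⟩ := hPCcover e he
        exact ⟨PC C, List.mem_map_of_mem (f := PC) (Finset.mem_toList.mpr hC), heC⟩
    have hulist_nil : ulist ([] : List (Set (Sym2 V))) = ∅ := rfl
    by_cases hkd : k ≤ d
    · -- merge case: k - 1 single components plus the rest
      set l1 : List (Set (Sym2 V)) := (lc.take (k-1)).map PC with hl1
      set Y : Set (Sym2 V) := ulist ((lc.drop (k-1)).map PC) with hY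
      have htlen : (lc.take (k-1)).length = k - 1 := by
        rw [List.length_take, hlclen]; omega
      have hdne : lc.drop (k-1) ≠ [] := by
        intro hcon
        have h2 := congrArg List.length hcon
        rw [List.length_drop, hlclen] at h2
        simp only [List.length_nil] at h2
        omega
      refine ⟨l1 ++ [Y], ?_, ?_, ?_, ?_⟩
      · rw [List.length_append, hl1, List.length_map, htlen]
        simp only [List.length_singleton]
        omega
      · rw [ulist_append]
        have h2 : ulist [Y] = Y := by
          show Y ∪ ulist [] = Y
          rw [hulist_nil, Set.union_empty]
        rw [h2, hl1, hY, ← ulist_append, ← List.map_append, List.take_append_drop]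
        exact hcoverlist
      · rw [List.pairwise_append]
        refine ⟨?_, by simp, ?_⟩
        · exact pairwise_disjoint_map_of_nodup PC _ (· ∈ comps)
            (fun C hC => hlcmem C (List.mem_of_mem_take hC))
            (hlcnd.sublist (List.take_sublist _ _))
            (fun C C' hC hC' hne => hPCdisj C hC C' hC' hne)
        · rintro X hX Z hZ
          rw [List.mem_singleton] at hZ
          subst hZ
          obtain ⟨C, hC, rfl⟩ := List.mem_map.mp hX
          apply disjoint_ulist
          rintro W hW
          obtain ⟨C', hC', rfl⟩ := List.mem_map.mp hW
          apply hPCdisj C (hlcmem C (List.mem_of_mem_take hC)) C'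
            (hlcmem C' (List.mem_of_mem_drop hC'))
          intro hcon
          subst hcon
          exact (List.disjoint_take_drop hlcnd (le_refl (k-1))) hC hC'
      · intro Q hQ
        rw [List.mem_append] at hQ
        rcases hQ with hQ | hQ
        · obtain ⟨C, hC, rfl⟩ := List.mem_map.mp hQ
          have hCc := hlcmem C (List.mem_of_mem_take hC)
          exact ⟨hPCne C hCc, hPCecv C hCc⟩
        · rw [List.mem_singleton] at hQ
          subst hQ
          constructor
          · obtain ⟨C, hC⟩ := List.exists_mem_of_ne_nil _ hdne
            have hCc := hlcmem C (List.mem_of_mem_drop hC)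
            obtain ⟨e, he⟩ := hPCne C hCc
            exact ⟨e, mem_ulist.mpr ⟨PC C, List.mem_map_of_mem (f := PC) hC, he⟩⟩
          · apply econnv_ulist (r := r)
            · intro hcon
              exact hdne (List.map_eq_nil_iff.mp hcon)
            · rintro X hX
              obtain ⟨C, hC, rfl⟩ := List.mem_map.mp hX
              have hCc := hlcmem C (List.mem_of_mem_drop hC)
              exact ⟨hPCecv C hCc, hPCrin C hCc⟩
    · push_neg at hkd
      by_cases hd2 : 2 ≤ d
      · -- quota case
        set ms : List ℕ := lc.map (fun C => (PC C).ncard) with hms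
        have hmspos : ∀ x ∈ ms, 1 ≤ x := by
          rintro x hx
          obtain ⟨C, hC, rfl⟩ := List.mem_map.mp hx
          have hCc := hlcmem C hC
          have hne := hPCne C hCc
          have hf : (PC C).Finite := hfinE.subset (hPCsub C hCc)
          have := (Set.ncard_pos hf).mpr hne
          omega
        have hmapfin : ∀ X ∈ lc.map PC, X.Finite := by
          rintro X hX
          obtain ⟨C, hC, rfl⟩ := List.mem_map.mp hX
          exact hfinE.subset (hPCsub C (hlcmem C hC))
        have hmappw : (lc.map PC).Pairwise Disjoint :=
          pairwise_disjoint_map_of_nodup PC _ (· ∈ comps) hlcmem hlcnd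
            (fun C C' hC hC' hne => hPCdisj C hC C' hC' hne)
        have hmssum : ms.sum = (ESet G (↑S:Set V)).ncard := by
          rw [← hcoverlist, ulist_ncard hmapfin hmappw, hms, List.map_map]
          rfl
        obtain ⟨qs, hqlen, hqsum, hqel⟩ := quota_list ms hmspos k
          (by rw [hms, List.length_map, hlclen]; omega) (by omega)
        have glue : ∀ (ll : List (Finset V)) (qq : List ℕ), (∀ C ∈ ll, C ∈ comps) →
            ll.Nodup → qq.length = ll.length →
            (∀ i (h1 : i < qq.length) (h2 : i < ll.length),
              1 ≤ qq[i] ∧ qq[i] ≤ (PC ll[i]).ncard) →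
            ∃ l : List (Set (Sym2 V)), l.length = qq.sum ∧ ulist l = ulist (ll.map PC) ∧
              l.Pairwise Disjoint ∧ ∀ Q ∈ l, Q.Nonempty ∧ EConnV Q := by
          intro ll
          induction ll with
          | nil =>
            intro qq _ _ hlen _
            have hqq : qq = [] := List.length_eq_zero_iff.mp hlen
            subst hqq
            exact ⟨[], by simp, rfl, by simp, by simp⟩
          | cons C ll ihl =>
            intro qq hmem hnd hlen hel
            match qq, hlen with
            | q :: qq', hlen =>
            have hC : C ∈ comps := hmem C (by simp)
            have hq := hel 0 (by simp) (by simp)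
            simp only [List.getElem_cons_zero] at hq
            have hrC : r ∉ C := fun hc => (hcomps_sub C hC (by exact_mod_cast hc)).2 rfl
            have hcoeins : (↑(insert r C) : Set V) = (↑C : Set V) ∪ {r} := by
              rw [Finset.coe_insert, ← Set.union_singleton]
            have hcard' : (insert r C).card ≤ n := by
              rw [Finset.card_insert_of_notMem hrC]
              obtain ⟨Ca, hCa, Cb, hCb, hCab⟩ := Finset.one_lt_card.mp hd2
              have hC2 : ∃ C2, C2 ∈ comps ∧ C2 ≠ C := by
                by_cases hCaC : Ca = C
                · exact ⟨Cb, hCb, fun hc => hCab (by rw [hCaC, hc])⟩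
                · exact ⟨Ca, hCa, hCaC⟩
              obtain ⟨C2, hC2m, hC2ne⟩ := hC2
              obtain ⟨x, hx⟩ := hcomps_ne C2 hC2m
              have hxe : x ∈ S.erase r := by
                have := hcomps_sub C2 hC2m (by exact_mod_cast hx : x ∈ (↑C2 : Set V))
                rw [← hrS] at this
                exact_mod_cast this
              have hxC : x ∉ C := by
                intro hc
                exact Set.disjoint_left.mp (hcomps_disj C2 hC2m C hC hC2ne)
                  (by exact_mod_cast hx) (by exact_mod_cast hc)
              have hCsub : C ⊆ S.erase r := by
                intro v hv
                have := hcomps_sub C hC (by exact_mod_cast hv : v ∈ (↑C : Set V))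
                rw [← hrS] at this
                exact_mod_cast this
              have hss : C ⊂ S.erase r := ⟨hCsub, fun hsub => hxC (hsub hxe)⟩
              have h1 := Finset.card_lt_card hss
              have h2 := Finset.card_erase_of_mem hr
              have h0 : 0 < S.card := Finset.card_pos.mpr ⟨r, hr⟩
              omega
            have hconn' : ConnOn G ↑(insert r C) := by
              rw [hcoeins]; exact hPCconn C hC
            have hES' : ESet G (↑(insert r C) : Set V) = PC C := by rw [hcoeins]
            obtain ⟨lA, hlAlen, hlAu, hlApw, hlAp⟩ :=
              IH (insert r C) hcard' hconn' q hq.1 (by rw [hES']; exact hq.2)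
            obtain ⟨lB, hlBlen, hlBu, hlBpw, hlBp⟩ := ihl qq'
              (fun C' hC' => hmem C' (by simp [hC'])) (List.nodup_cons.mp hnd).2
              (by simpa using hlen)
              (fun i h1 h2 => by
                have := hel (i+1) (by simpa using h1) (by simpa using h2)
                simpa using this)
            refine ⟨lA ++ lB, ?_, ?_, ?_, ?_⟩
            · rw [List.length_append, hlAlen, hlBlen, List.sum_cons]
            · rw [ulist_append, hlAu, hlBu, hES']
              rfl
            · rw [List.pairwise_append]
              refine ⟨hlApw, hlBpw, ?_⟩
              intro X hX Z hZ
              have hXsub : X ⊆ PC C := by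
                rw [← hES', ← hlAu]
                intro e he
                exact mem_ulist.mpr ⟨X, hX, he⟩
              have hZsub : Z ⊆ ulist (ll.map PC) := by
                rw [← hlBu]
                intro e he
                exact mem_ulist.mpr ⟨Z, hZ, he⟩
              refine Set.disjoint_of_subset hXsub hZsub ?_
              apply disjoint_ulist
              rintro W hW
              obtain ⟨C', hC', rfl⟩ := List.mem_map.mp hW
              exact hPCdisj C hC C' (hmem C' (by simp [hC']))
                (fun hcon => (List.nodup_cons.mp hnd).1 (hcon ▸ hC'))
            · intro Q hQ
              rcases List.mem_append.mp hQ with h | h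
              · exact hlAp Q h
              · exact hlBp Q h
        obtain ⟨l, hl1, hl2, hl3, hl4⟩ := glue lc qs hlcmem hlcnd
          (by rw [hqlen, hms, List.length_map])
          (fun i h1 h2 => by
            have h2' : i < ms.length := by rw [hms, List.length_map]; exact h2
            have h3 := hqel i h1 h2'
            simp only [hms, List.getElem_map] at h3
            exact h3)
        exact ⟨l, by rw [hl1, hqsum], by rw [hl2, hcoverlist], hl3, hl4⟩
      · -- d = 1 case
        have hd1' : d = 1 := by omega
        have huniq : ∀ a, a ∈ S.erase r → ∀ b, b ∈ S.erase r → cp a = cp b := by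
          intro a ha b hb
          have h1 : cp a ∈ comps := Finset.mem_image_of_mem cp ha
          have h2 : cp b ∈ comps := Finset.mem_image_of_mem cp hb
          obtain ⟨C0, hC0⟩ := Finset.card_eq_one.mp hd1'
          rw [hC0, Finset.mem_singleton] at h1 h2
          rw [h1, h2]
        have huniv : ∀ a, a ∈ S.erase r → ∀ b, b ∈ S.erase r → b ∈ comp G ↑S r a := by
          intro a ha b hb
          have h1 : b ∈ cp b := hmem_self b hb
          rw [← huniq a ha b hb] at h1
          rw [← hcp_coe a ha]
          exact_mod_cast h1
        set ER : Set (Sym2 V) := {e | e ∈ ESet G (↑S : Set V) ∧ r ∈ e} with hERdef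
        have hERsub : ER ⊆ ESet G (↑S : Set V) := fun e he => he.1
        have hE0sub : E0 ⊆ ESet G (↑S : Set V) := ESet_mono Set.diff_subset
        have hsplit : ESet G (↑S : Set V) = ER ∪ E0 := by
          apply Set.Subset.antisymm
          · intro e he
            by_cases hrme : r ∈ e
            · exact Or.inl ⟨he, hrme⟩
            · exact Or.inr ⟨he.1, fun v hv => ⟨he.2 v hv, fun hc => hrme (hc ▸ hv)⟩⟩
          · rintro e (he | he)
            · exact he.1
            · exact hE0sub he
        have hdisjsplit : Disjoint ER E0 := by
          rw [Set.disjoint_left]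
          rintro e ⟨_, hre⟩ he0
          exact (he0.2 r hre).2 rfl
        have hfinER : ER.Finite := hfinE.subset hERsub
        have hfinE0 : E0.Finite := hfinE.subset hE0sub
        -- the attach edge
        obtain ⟨a1, ha1⟩ := Finset.nonempty_iff_ne_empty.mpr hS1
        have ha1S : a1 ∈ (↑S : Set V) \ {r} := by rw [← hrS]; exact_mod_cast ha1
        obtain ⟨us, hus, husr⟩ := exists_attach hconn hr ha1S.1 ha1S.2
        have husS : us ∈ S.erase r := by
          have := comp_subset ha1S hus
          rw [← hrS] at this
          exact_mod_cast this
        have hestar : s(us, r) ∈ ER := ⟨husr, by simp⟩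
        have ht1 : 1 ≤ ER.ncard := (Set.ncard_pos hfinER).mpr ⟨_, hestar⟩
        have hmsum : (ESet G (↑S : Set V)).ncard = ER.ncard + E0.ncard := by
          rw [hsplit]
          exact Set.ncard_union_eq hdisjsplit hfinER hfinE0
        have reach_to_r : ∀ a, a ∈ (↑S : Set V) \ {r} → ∀ R : Set (Sym2 V),
            E0 ⊆ R → s(us, r) ∈ R → SReach R a r := by
          intro a haS R hE0R hsR
          have haE : a ∈ S.erase r := by
            rw [← hrS] at haS
            exact_mod_cast haS
          have h1 : us ∈ comp G ↑S r a := huniv a haE us husS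
          have h2 : SReach E0 a us := h1
          exact (h2.mono hE0R).tail ⟨s(us, r), hsR, by simp, by simp⟩
        by_cases hkt : k ≤ ER.ncard
        · -- peel k - 1 star edges
          set ERF : Finset (Sym2 V) := hfinER.toFinset with hERF
          have hERFcard : ERF.card = ER.ncard := (Set.ncard_eq_toFinset_card _ hfinER).symm
          have hesERF : s(us, r) ∈ ERF := hfinER.mem_toFinset.mpr hestar
          obtain ⟨Fs, hFsub, hFcard⟩ := Finset.exists_subset_card_eq
            (s := ERF.erase (s(us, r))) (n := k - 1)
            (by rw [Finset.card_erase_of_mem hesERF, hERFcard]; omega)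
          have hFsER : ∀ e ∈ Fs, e ∈ ER := by
            intro e he
            exact hfinER.mem_toFinset.mp (Finset.mem_of_mem_erase (hFsub he))
          have hesFs : s(us, r) ∉ Fs := fun hc => (Finset.notMem_erase _ _) (hFsub hc)
          set Rest : Set (Sym2 V) := ESet G (↑S : Set V) \ ↑Fs with hRest
          have hE0Rest : E0 ⊆ Rest := by
            intro e he
            refine ⟨hE0sub he, fun hc => ?_⟩
            exact Set.disjoint_left.mp hdisjsplit (hFsER e (by exact_mod_cast hc)) he
          have hesRest : s(us, r) ∈ Rest := ⟨husr, fun hc => hesFs (by exact_mod_cast hc)⟩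
          refine ⟨(Fs.toList.map (fun e => ({e} : Set (Sym2 V)))) ++ [Rest], ?_, ?_, ?_, ?_⟩
          · rw [List.length_append, List.length_map, Finset.length_toList, hFcard]
            simp only [List.length_singleton]
            omega
          · rw [ulist_append]
            have h2 : ulist [Rest] = Rest := by
              show Rest ∪ ulist [] = Rest
              rw [hulist_nil, Set.union_empty]
            have h3 : ulist (Fs.toList.map (fun e => ({e} : Set (Sym2 V)))) = ↑Fs := by
              ext e
              rw [mem_ulist]
              constructor
              · rintro ⟨X, hX, heX⟩
                obtain ⟨f, hf, rfl⟩ := List.mem_map.mp hX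
                rw [Set.mem_singleton_iff] at heX
                rw [heX]
                exact_mod_cast Finset.mem_toList.mp hf
              · intro he
                exact ⟨{e}, List.mem_map_of_mem (Finset.mem_toList.mpr
                  (by exact_mod_cast he)), rfl⟩
            rw [h2, h3, hRest]
            apply Set.union_diff_cancel
            intro e he
            exact hERsub (hFsER e (by exact_mod_cast he))
          · rw [List.pairwise_append]
            refine ⟨?_, by simp, ?_⟩
            · exact pairwise_disjoint_map_of_nodup (fun e => ({e} : Set (Sym2 V)))
                _ (fun _ => True) (fun _ _ => trivial) (Finset.nodup_toList _)
                (fun x y _ _ hne => by simpa using hne)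
            · rintro X hX Z hZ
              rw [List.mem_singleton] at hZ
              subst hZ
              obtain ⟨f, hf, rfl⟩ := List.mem_map.mp hX
              rw [Set.disjoint_left]
              rintro e he heR
              rw [Set.mem_singleton_iff] at he
              subst he
              exact heR.2 (by exact_mod_cast Finset.mem_toList.mp hf)
          · intro Q hQ
            rw [List.mem_append] at hQ
            rcases hQ with hQ | hQ
            · obtain ⟨f, _, rfl⟩ := List.mem_map.mp hQ
              exact ⟨⟨f, rfl⟩, econnv_singleton f⟩
            · rw [List.mem_singleton] at hQ
              subst hQ
              refine ⟨⟨_, hesRest⟩, ?_⟩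
              have key : ∀ a ∈ vsup Rest, SReach Rest a r := by
                rintro a ⟨e, he, hae⟩
                have haS : a ∈ (↑S : Set V) := he.1.2 a hae
                by_cases har : a = r
                · rw [har]; exact Relation.ReflTransGen.refl
                · exact reach_to_r a ⟨haS, har⟩ Rest hE0Rest hesRest
              intro a ha b hb
              exact (key a ha).trans (key b hb).symm
        · -- peel the whole star, recurse on S minus r
          push_neg at hkt
          have hcard'' : (S.erase r).card ≤ n := by
            have h2 := Finset.card_erase_of_mem hr
            have h0 : 0 < S.card := Finset.card_pos.mpr ⟨r, hr⟩
            omega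
          have hES'' : ESet G (↑(S.erase r) : Set V) = E0 := by rw [hrS]
          have hconn'' : ConnOn G ↑(S.erase r) := by
            intro a ha b hb
            rw [hES'']
            have ha' : a ∈ S.erase r := by exact_mod_cast ha
            have hb' : b ∈ S.erase r := by exact_mod_cast hb
            exact huniv a ha' b hb'
          obtain ⟨lB, hlBlen, hlBu, hlBpw, hlBp⟩ := IH (S.erase r) hcard'' hconn''
            (k - ER.ncard) (by omega) (by rw [hES'']; omega)
          set ERF : Finset (Sym2 V) := hfinER.toFinset with hERF
          have hERFcard : ERF.card = ER.ncard := (Set.ncard_eq_toFinset_card _ hfinER).symm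
          have hlBsub : ∀ Q ∈ lB, Q ⊆ E0 := by
            intro Q hQ e he
            rw [← hES'', ← hlBu]
            exact mem_ulist.mpr ⟨Q, hQ, he⟩
          refine ⟨(ERF.toList.map (fun e => ({e} : Set (Sym2 V)))) ++ lB, ?_, ?_, ?_, ?_⟩
          · rw [List.length_append, List.length_map, Finset.length_toList, hERFcard, hlBlen]
            omega
          · rw [ulist_append, hlBu, hES'']
            have h3 : ulist (ERF.toList.map (fun e => ({e} : Set (Sym2 V)))) = ↑ERF := by
              ext e
              rw [mem_ulist]
              constructor
              · rintro ⟨X, hX, heX⟩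
                obtain ⟨f, hf, rfl⟩ := List.mem_map.mp hX
                rw [Set.mem_singleton_iff] at heX
                rw [heX]
                exact_mod_cast Finset.mem_toList.mp hf
              · intro he
                exact ⟨{e}, List.mem_map_of_mem (Finset.mem_toList.mpr
                  (by exact_mod_cast he)), rfl⟩
            rw [h3]
            have h4 : (↑ERF : Set (Sym2 V)) = ER := hfinER.coe_toFinset
            rw [h4, ← hsplit]
          · rw [List.pairwise_append]
            refine ⟨?_, hlBpw, ?_⟩
            · exact pairwise_disjoint_map_of_nodup (fun e => ({e} : Set (Sym2 V)))
                _ (fun _ => True) (fun _ _ => trivial) (Finset.nodup_toList _)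
                (fun x y _ _ hne => by simpa using hne)
            · rintro X hX Z hZ
              obtain ⟨f, hf, rfl⟩ := List.mem_map.mp hX
              rw [Set.disjoint_left]
              rintro e he heZ
              rw [Set.mem_singleton_iff] at he
              subst he
              have h5 : e ∈ ER := hfinER.mem_toFinset.mp (Finset.mem_toList.mp hf)
              exact Set.disjoint_left.mp hdisjsplit h5 (hlBsub Z hZ heZ)
          · intro Q hQ
            rw [List.mem_append] at hQ
            rcases hQ with hQ | hQ
            · obtain ⟨f, _, rfl⟩ := List.mem_map.mp hQ
              exact ⟨⟨f, rfl⟩, econnv_singleton f⟩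
            · exact hlBp Q hQ

end PeelMain

lemma P_pos [Fintype V] (G : SimpleGraph V) (hG : G.Connected) (k : ℕ) (hk1 : 1 ≤ k)
    (hkm : k ≤ G.edgeSet.ncard) : 1 ≤ (kEdgeTuples' G k).ncard := by
  classical
  have hconn : ConnOn G ↑(Finset.univ : Finset V) := by
    rw [Finset.coe_univ]; exact connOn_univ hG.preconnected
  have hES : ESet G (↑(Finset.univ : Finset V) : Set V) = G.edgeSet := by
    rw [Finset.coe_univ]; exact ESet_univ
  obtain ⟨l, hlen, hu, hpw, hp⟩ := peel G (Finset.univ : Finset V).card Finset.univ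
    (le_refl _) hconn k hk1 (by rw [hES]; exact hkm)
  set parts : Fin k → Set (Sym2 V) := fun t => l.getD t.val ∅ with hparts
  have hlt : ∀ t : Fin k, t.val < l.length := fun t => by rw [hlen]; exact t.isLt
  have hpartseq : ∀ t : Fin k, parts t = l[t.val]'(hlt t) :=
    fun t => List.getD_eq_getElem l ∅ (hlt t)
  have hmemparts : ∀ t : Fin k, parts t ∈ l := fun t => by
    rw [hpartseq]; exact List.getElem_mem _
  have hsub : ∀ t, parts t ⊆ G.edgeSet := by
    intro t e he
    rw [← hES, ← hu]
    exact mem_ulist.mpr ⟨parts t, hmemparts t, he⟩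
  have hcover : (⋃ t, parts t) = G.edgeSet := by
    apply Set.Subset.antisymm
    · exact Set.iUnion_subset hsub
    · intro e he
      rw [← hES, ← hu] at he
      obtain ⟨X, hX, heX⟩ := mem_ulist.mp he
      obtain ⟨i, hilt, hieq⟩ := List.mem_iff_getElem.mp hX
      have hik : i < k := by rw [← hlen]; exact hilt
      refine Set.mem_iUnion.mpr ⟨⟨i, hik⟩, ?_⟩
      rw [hpartseq ⟨i, hik⟩]
      simp only []
      rw [hieq]
      exact heX
  have hdisj : Pairwise fun t t' : Fin k => Disjoint (parts t) (parts t') := by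
    have hpw' := List.pairwise_iff_getElem.mp hpw
    intro t t' hne
    have hne' : t.val ≠ t'.val := fun hc => hne (Fin.ext hc)
    rcases Nat.lt_or_ge t.val t'.val with h | h
    · rw [hpartseq t, hpartseq t']
      exact hpw' t.val t'.val (hlt t) (hlt t') h
    · rw [hpartseq t, hpartseq t']
      exact (hpw' t'.val t.val (hlt t') (hlt t) (by omega)).symm
  have hconn' : ∀ t, EdgeConn (parts t) :=
    fun t => edgeConn_of_econnv (hsub t) (hp _ (hmemparts t)).1 (hp _ (hmemparts t)).2
  have hne : ∀ t, (parts t).Nonempty := fun t => (hp _ (hmemparts t)).1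
  have hfin : ∀ t, (parts t).Finite := fun t => (Set.toFinite _).subset (hsub t)
  obtain ⟨σ, hmem⟩ := member_of_partition G k parts hcover hdisj hconn' hne hfin
  have hfinT : (kEdgeTuples' G k).Finite := kEdgeTuples'_finite G k
  exact (Set.ncard_pos hfinT).mpr ⟨_, hmem⟩

/-- the main quantitative theorem, natural-number form packaged -/
lemma main_bound (k : ℕ) (hk : 2 ≤ k) :
    ∃ c : ℝ, 0 < c ∧ ∀ (V : Type) [Fintype V] (G : SimpleGraph V),
      G.Connected → k ≤ G.edgeSet.ncard →
      c * (Real.log (Fintype.card V)) ^ (k - 1) ≤ ((kEdgeTuples' G k).ncard : ℝ) := by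
  have hlog4 : 0 < Real.log 4 := Real.log_pos (by norm_num)
  set c0 : ℝ := (((k-1).factorial * k.factorial : ℕ) : ℝ)⁻¹ * ((2 * Real.log 4)⁻¹) ^ (k-1)
    with hc0
  set c1 : ℝ := (((2 * k : ℕ) : ℝ) * Real.log 4)⁻¹ ^ (k-1) with hc1
  have hc0pos : 0 < c0 := by
    apply mul_pos
    · rw [inv_pos]
      exact_mod_cast Nat.pos_of_ne_zero (by positivity)
    · apply pow_pos
      rw [inv_pos]
      positivity
  have hc1pos : 0 < c1 := by
    apply pow_pos
    rw [inv_pos]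
    have : (0:ℝ) < ((2 * k : ℕ) : ℝ) := by
      have : 0 < 2 * k := by omega
      exact_mod_cast this
    positivity
  refine ⟨min c0 c1, lt_min hc0pos hc1pos, ?_⟩
  intro V _ G hG hkm
  classical
  set n := Fintype.card V with hn
  set Pn := (kEdgeTuples' G k).ncard with hPn
  have hP1 : 1 ≤ Pn := P_pos G hG k (by omega) hkm
  have hn1 : 1 ≤ n := by
    haveI := hG.nonempty
    exact Fintype.card_pos
  have hlogn0 : 0 ≤ Real.log n := Real.log_nonneg (by exact_mod_cast hn1)
  obtain ⟨D, hn4D, hchoose⟩ := count_lower G hG k hk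
  by_cases hbig : ((4:ℝ) ^ (2 * k)) ≤ (n : ℝ)
  · -- main case
    have hD2k : 2 * k ≤ D := by
      by_contra hcon
      push_neg at hcon
      have h1 : (4:ℕ) ^ D < 4 ^ (2*k) := Nat.pow_lt_pow_right (by norm_num) hcon
      have h2 : ((4:ℕ)^(2*k) : ℝ) ≤ (n:ℝ) := by
        push_cast
        exact_mod_cast hbig
      have h3 : (n : ℝ) ≤ ((4:ℕ)^D : ℝ) := by exact_mod_cast hn4D
      have h4 : ((4:ℕ)^D : ℝ) < ((4:ℕ)^(2*k) : ℝ) := by exact_mod_cast h1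
      linarith
    have hkD : k ≤ D := by omega
    have hch := hchoose hkD
    -- descFactorial bound
    have hdesc : (D - k + 1) ^ (k - 1) ≤ (k-1).factorial * (D-1).choose (k-1) := by
      have h1 := Nat.pow_sub_le_descFactorial (D - 1) (k - 1)
      rw [Nat.descFactorial_eq_factorial_mul_choose] at h1
      have h2 : D - 1 + 1 - (k - 1) = D - k + 1 := by omega
      rwa [h2] at h1
    have hnat : (D - k + 1) ^ (k - 1) ≤ (k-1).factorial * (k.factorial * Pn) := by
      calc (D - k + 1) ^ (k - 1) ≤ (k-1).factorial * (D-1).choose (k-1) := hdesc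
      _ ≤ (k-1).factorial * (Pn * k.factorial) := Nat.mul_le_mul_left _ hch
      _ = (k-1).factorial * (k.factorial * Pn) := by ring
    -- real inequalities
    set N : ℕ := D - k + 1 with hN
    have hlogD : Real.log n ≤ (D:ℝ) * Real.log 4 := by
      have h1 : (n:ℝ) ≤ (4:ℝ)^D := by
        have := hn4D
        have h2 : ((4^D : ℕ) : ℝ) = (4:ℝ)^D := by push_cast; ring
        rw [← h2]
        exact_mod_cast this
      calc Real.log n ≤ Real.log ((4:ℝ)^D) := Real.log_le_log (by exact_mod_cast hn1) h1
      _ = (D:ℝ) * Real.log 4 := by rw [Real.log_pow]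
    have hND : ((D:ℝ)/2) ≤ (N:ℝ) := by
      have : (N:ℝ) = (D:ℝ) - (k:ℝ) + 1 := by
        rw [hN]
        push_cast [Nat.cast_sub hkD]
        ring
      rw [this]
      have hDk : (2*k : ℝ) ≤ (D:ℝ) := by exact_mod_cast hD2k
      linarith
    have hlogN : Real.log n ≤ (2 * Real.log 4) * (N:ℝ) := by
      calc Real.log n ≤ (D:ℝ) * Real.log 4 := hlogD
      _ = (2 * Real.log 4) * ((D:ℝ)/2) := by ring
      _ ≤ (2 * Real.log 4) * (N:ℝ) := by
          apply mul_le_mul_of_nonneg_left hND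
          positivity
    have hpow : (Real.log n)^(k-1) ≤ (2 * Real.log 4)^(k-1) * ((N:ℝ))^(k-1) := by
      calc (Real.log n)^(k-1) ≤ ((2 * Real.log 4) * (N:ℝ))^(k-1) :=
        pow_le_pow_left₀ hlogn0 hlogN (k-1)
      _ = (2 * Real.log 4)^(k-1) * ((N:ℝ))^(k-1) := mul_pow _ _ _
    have hNP : ((N:ℝ))^(k-1) ≤ (((k-1).factorial * k.factorial : ℕ):ℝ) * (Pn:ℝ) := by
      have := hnat
      have h2 : ((N ^ (k-1) : ℕ) : ℝ) ≤ (((k-1).factorial * (k.factorial * Pn) : ℕ) : ℝ) := by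
        exact_mod_cast this
      push_cast at h2 ⊢
      linarith
    have hfacpos : (0:ℝ) < (((k-1).factorial * k.factorial : ℕ):ℝ) := by
      have : 0 < (k-1).factorial * k.factorial := by positivity
      exact_mod_cast this
    calc min c0 c1 * (Real.log n)^(k-1) ≤ c0 * (Real.log n)^(k-1) := by
          apply mul_le_mul_of_nonneg_right (min_le_left _ _) (by positivity)
    _ ≤ c0 * ((2 * Real.log 4)^(k-1) * ((N:ℝ))^(k-1)) := by
          apply mul_le_mul_of_nonneg_left hpow (le_of_lt hc0pos)
    _ = (((k-1).factorial * k.factorial : ℕ) : ℝ)⁻¹ *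
          (((2 * Real.log 4)⁻¹)^(k-1) * (2 * Real.log 4)^(k-1)) * ((N:ℝ))^(k-1) := by
          rw [hc0]; ring
    _ = (((k-1).factorial * k.factorial : ℕ) : ℝ)⁻¹ * ((N:ℝ))^(k-1) := by
          rw [← mul_pow, inv_mul_cancel₀ (by positivity : (2 * Real.log 4) ≠ 0)]
          simp
    _ ≤ (((k-1).factorial * k.factorial : ℕ) : ℝ)⁻¹ *
          ((((k-1).factorial * k.factorial : ℕ):ℝ) * (Pn:ℝ)) := by
          apply mul_le_mul_of_nonneg_left hNP
          positivity
    _ = (Pn : ℝ) := by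
          rw [← mul_assoc, inv_mul_cancel₀ (ne_of_gt hfacpos), one_mul]
  · -- small case
    push_neg at hbig
    have hlogsmall : Real.log n ≤ ((2*k : ℕ):ℝ) * Real.log 4 := by
      have h1 : Real.log n ≤ Real.log ((4:ℝ)^(2*k)) :=
        Real.log_le_log (by exact_mod_cast hn1) (le_of_lt hbig)
      rw [Real.log_pow] at h1
      exact_mod_cast h1
    have hprod : min c0 c1 * (Real.log n)^(k-1) ≤ 1 := by
      have h2 : (Real.log n)^(k-1) ≤ (((2*k : ℕ):ℝ) * Real.log 4)^(k-1) :=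
        pow_le_pow_left₀ hlogn0 hlogsmall (k-1)
      have hxpos : (0:ℝ) < ((2*k : ℕ):ℝ) * Real.log 4 := by
        have : (0:ℝ) < ((2*k : ℕ):ℝ) := by
          have : 0 < 2*k := by omega
          exact_mod_cast this
        positivity
      calc min c0 c1 * (Real.log n)^(k-1) ≤ c1 * (((2*k : ℕ):ℝ) * Real.log 4)^(k-1) := by
            apply mul_le_mul (min_le_right _ _) h2 (by positivity) (le_of_lt hc1pos)
      _ = 1 := by
            rw [hc1, ← mul_pow, inv_mul_cancel₀ (ne_of_gt hxpos), one_pow]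
    calc min c0 c1 * (Real.log n)^(k-1) ≤ 1 := hprod
    _ ≤ (Pn : ℝ) := by exact_mod_cast hP1

end EPL

/-- for every `k ≥ 2` there is a constant `c_k > 0` such that every finite
connected graph `G` on `n` vertices (with at least `k` edges) satisfies
`P(G,k) ≥ c_k (log n)^(k-1)`. -/
theorem P_k_ge_log_pow (k : ℕ) (hk : 2 ≤ k) :
    ∃ c : ℝ, 0 < c ∧ ∀ (V : Type) [Fintype V] (G : SimpleGraph V),
      G.Connected → k ≤ G.edgeSet.ncard →
      c * (Real.log (Fintype.card V)) ^ (k - 1) ≤ (P G k : ℝ) := by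
  obtain ⟨c, hc, h⟩ := EPL.main_bound k hk
  refine ⟨c, hc, ?_⟩
  intro V _ G hG hkm
  have h2 := h V G hG hkm
  have heq : P G k = (EPL.kEdgeTuples' G k).ncard := rfl
  rw [heq]
  exact h2
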